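/- arXiv:2401.02354 — 7 statements merged into one kernel-verified Lean document; each statement's English description precedes it below -/
import Mathlib

section
/- Let A = ι →₀ ℕ be a transitive finite-rank ℕSet algebra that is a fusion semiring with involution σ, and let φ be its Frobenius–Perron character. Suppose ε : ι → ℕ satisfies ε(i) ≥ 1 for all i, together with the relations ε(k)·N(i,j,σ(k)) = ε(j)·N(k,i,σ(j)) = ε(i)·N(j,k,σ(i)) and N(i,j,σ(k)) = N(σ(j),σ(i),k) for all i, j, k ∈ ι. Then the vector R : ι → ℝ defined by R(k) := φ(e_k)/ε(k) is a regular element of A; that is, R(k) > 0 for all k and a ⋆ R = φ(a) • R for every a ∈ ι →₀ ℕ. (In the paper, A is the fusion semiring of a fusion category C over a field K and ε(X) = dim_E End(X) where E = End(𝟙); the displayed relations are those of the cyclic permutation lemma.) -/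
open Finsupp

/-- An ℕSet algebra: an associative multiplication on the free commutative monoid
`ι →₀ ℕ`, additive in each argument, with a two-sided unit. -/
structure NSetAlgebra (ι : Type*) where
  mul : (ι →₀ ℕ) → (ι →₀ ℕ) → (ι →₀ ℕ)
  one : ι →₀ ℕ
  mul_assoc : ∀ a b c, mul (mul a b) c = mul a (mul b c)
  one_mul : ∀ a, mul one a = a
  mul_one : ∀ a, mul a one = a
  left_distrib : ∀ a b c, mul a (b + c) = mul a b + mul a c
  right_distrib : ∀ a b c, mul (a + b) c = mul a c + mul b c
  zero_mul : ∀ a, mul 0 a = 0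
  mul_zero : ∀ a, mul a 0 = 0

namespace NSetAlgebra

variable {ι : Type*}

/-- The structure constants `N(i,j,k) = (e_i * e_j)(k)`. -/
noncomputable def N (A : NSetAlgebra ι) (i j k : ι) : ℕ :=
  A.mul (Finsupp.single i 1) (Finsupp.single j 1) k

/-- Transitivity: for all simple `i, j` there are `u, v` with
`e_j ≤ e_u * e_i` and `e_j ≤ e_i * e_v`. -/
def Transitive (A : NSetAlgebra ι) : Prop :=
  ∀ i j : ι, (∃ u, Finsupp.single j 1 ≤ A.mul (Finsupp.single u 1) (Finsupp.single i 1)) ∧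
             (∃ v, Finsupp.single j 1 ≤ A.mul (Finsupp.single i 1) (Finsupp.single v 1))

/-- A Frobenius–Perron character: additive, multiplicative, unital,
and strictly positive on simple elements. -/
structure IsFPCharacter (A : NSetAlgebra ι) (φ : (ι →₀ ℕ) → ℝ) : Prop where
  map_add : ∀ a b, φ (a + b) = φ a + φ b
  map_mul : ∀ a b, φ (A.mul a b) = φ a * φ b
  map_one : φ A.one = 1
  pos : ∀ i, 0 < φ (Finsupp.single i 1)

/-- The ℝ-bilinear extension of the multiplication to vectors `ι → ℝ`:
`(r ⋆ s)(k) = ∑ i j, r i * s j * N i j k`. -/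
noncomputable def starMul [Fintype ι] (A : NSetAlgebra ι) (r s : ι → ℝ) : ι → ℝ :=
  fun k => ∑ i : ι, ∑ j : ι, r i * s j * (A.N i j k : ℝ)

/-- A fusion semiring structure: an involution `σ` such that for all simples `i, j`,
`j = σ i` iff there is a unique simple `k` with `e_k ≤ 1 ∩ (e_i * e_j)`,
iff there is a unique simple `k` with `e_k ≤ 1 ∩ (e_j * e_i)`. -/
structure IsFusionSemiring (A : NSetAlgebra ι) (σ : ι → ι) : Prop where
  involutive : ∀ i, σ (σ i) = i
  dual_iff : ∀ i j : ι,
    (∃! k, Finsupp.single k 1 ≤ A.one ∧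
        Finsupp.single k 1 ≤ A.mul (Finsupp.single i 1) (Finsupp.single j 1)) ↔ j = σ i
  dual_iff' : ∀ i j : ι,
    (∃! k, Finsupp.single k 1 ≤ A.one ∧
        Finsupp.single k 1 ≤ A.mul (Finsupp.single j 1) (Finsupp.single i 1)) ↔ j = σ i

/-- A regular element: a strictly positive vector `R` with `e_i ⋆ R = φ(e_i) • R`
for every simple `i`. -/
noncomputable def IsRegular [Fintype ι] (A : NSetAlgebra ι) (φ : (ι →₀ ℕ) → ℝ)
    (R : ι → ℝ) : Prop :=
  (∀ i, 0 < R i) ∧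
  ∀ i : ι, A.starMul (fun k => ((Finsupp.single i 1 : ι →₀ ℕ) k : ℝ)) R
    = φ (Finsupp.single i 1) • R

end NSetAlgebra

/-- The real vector underlying an element of `ι →₀ ℕ`. -/
def toRealVec {ι : Type*} (a : ι →₀ ℕ) : ι → ℝ := fun k => (a k : ℝ)

/-- The ℝ-linear extension of an additive map `(ι →₀ ℕ) → (κ →₀ ℕ)` to vectors. -/
noncomputable def linExt {ι κ : Type*} [Fintype ι]
    (f : (ι →₀ ℕ) → (κ →₀ ℕ)) (r : ι → ℝ) : κ → ℝ :=
  fun x => ∑ i : ι, r i * (f (Finsupp.single i 1) x : ℝ)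


section MyHelpers

variable {ι : Type*} [Fintype ι]

private lemma myphi_zero {A : NSetAlgebra ι} {φ : (ι →₀ ℕ) → ℝ}
    (hφ : A.IsFPCharacter φ) : φ 0 = 0 := by
  have h := hφ.map_add 0 0
  simp at h
  linarith

private lemma myphi_sum {A : NSetAlgebra ι} {φ : (ι →₀ ℕ) → ℝ}
    (hφ : A.IsFPCharacter φ) {κ : Type*} [DecidableEq κ] (s : Finset κ)
    (f : κ → (ι →₀ ℕ)) :
    φ (∑ x ∈ s, f x) = ∑ x ∈ s, φ (f x) := by
  induction s using Finset.induction with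
  | empty => simpa using myphi_zero hφ
  | insert _ _ h ih => rw [Finset.sum_insert h, Finset.sum_insert h, hφ.map_add, ih]

private lemma myphi_single {A : NSetAlgebra ι} {φ : (ι →₀ ℕ) → ℝ}
    (hφ : A.IsFPCharacter φ) (k : ι) (n : ℕ) :
    φ (Finsupp.single k n) = (n : ℝ) * φ (Finsupp.single k 1) := by
  induction n with
  | zero => simpa using myphi_zero hφ
  | succ n ih =>
      have hs : Finsupp.single k (n + 1) = Finsupp.single k n + Finsupp.single k 1 := by
        rw [← Finsupp.single_add]
      rw [hs, hφ.map_add, ih]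
      push_cast
      ring

private lemma myphi_eq_sum {A : NSetAlgebra ι} {φ : (ι →₀ ℕ) → ℝ}
    (hφ : A.IsFPCharacter φ) (a : ι →₀ ℕ) :
    φ a = ∑ k : ι, (a k : ℝ) * φ (Finsupp.single k 1) := by
  classical
  have ha : a = ∑ k : ι, Finsupp.single k (a k) := by
    ext j
    rw [Finsupp.finset_sum_apply]
    simp [Finsupp.single_apply]
  conv_lhs => rw [ha]
  rw [myphi_sum hφ]
  exact Finset.sum_congr rfl fun k _ => myphi_single hφ k (a k)

end MyHelpers

open NSetAlgebra in
/-- Theorem (New Regular element): in a transitive finite-rank fusion semiring,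
the vector `R(k) = FPdim(e_k) / ε(k)` is a regular element, where `ε` satisfies the
relations of the cyclic permutation lemma. -/
theorem stmt0 {ι : Type*} [Fintype ι] [Nonempty ι]
    (A : NSetAlgebra ι) (hA : A.Transitive)
    (σ : ι → ι) (hσ : A.IsFusionSemiring σ)
    (φ : (ι →₀ ℕ) → ℝ) (hφ : A.IsFPCharacter φ)
    (ε : ι → ℕ) (hε : ∀ i, 1 ≤ ε i)
    (hcyc₁ : ∀ i j k : ι, ε k * A.N i j (σ k) = ε j * A.N k i (σ j))
    (hcyc₂ : ∀ i j k : ι, ε j * A.N k i (σ j) = ε i * A.N j k (σ i))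
    (hrev : ∀ i j k : ι, A.N i j (σ k) = A.N (σ j) (σ i) k) :
    (∀ k, 0 < φ (Finsupp.single k 1) / (ε k : ℝ)) ∧
    ∀ a : ι →₀ ℕ,
      A.starMul (toRealVec a) (fun k => φ (Finsupp.single k 1) / (ε k : ℝ))
        = φ a • (fun k => φ (Finsupp.single k 1) / (ε k : ℝ)) := by
  classical
  set R : ι → ℝ := fun k => φ (Finsupp.single k 1) / (ε k : ℝ) with hR
  have hεpos : ∀ k, (0 : ℝ) < (ε k : ℝ) := fun k => by exact_mod_cast hε k
  have hinv := hσ.involutive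
  have hRpos : ∀ k, 0 < R k := fun k => div_pos (hφ.pos k) (hεpos k)
  -- cyclic relations
  have rel1 : ∀ i j k, ε (σ k) * A.N i j k = ε j * A.N (σ i) k j := by
    intro i j k
    have h := hcyc₁ i j (σ k)
    rw [hinv k] at h
    rw [h]
    congr 1
    have h2 := hrev (σ k) i j
    rwa [hinv k] at h2
  have rel3 : ∀ i j k, ε k * A.N i j k = ε (σ j) * A.N (σ i) k j := by
    intro i j k
    have h0 : A.N i j k = A.N (σ j) (σ i) (σ k) := by
      have h := hrev i j (σ k); rwa [hinv k] at h
    have h1 := hcyc₁ (σ j) (σ i) k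
    have h2 := hcyc₂ (σ j) (σ i) k
    rw [hinv i] at h1 h2
    rw [hinv j] at h2
    rw [h0, h1, h2]
  -- transitivity gives positive structure constants
  have hNpos : ∀ j k, ∃ u, 1 ≤ A.N u j k := by
    intro j k
    obtain ⟨u, hu⟩ := (hA j k).1
    refine ⟨u, ?_⟩
    have := Finsupp.le_def.mp hu k
    simpa [NSetAlgebra.N] using this
  -- ε ∘ σ = ε
  have heps : ∀ k, ε (σ k) = ε k := by
    intro k
    obtain ⟨u, hu⟩ := hNpos k k
    have h1 := rel1 u k k
    have h3 := rel3 u k k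
    have hmpos : 0 < A.N (σ u) k k := by
      have h1' : 0 < ε k * A.N (σ u) k k := by
        rw [← h1]; exact Nat.mul_pos (hε (σ k)) hu
      rcases Nat.eq_zero_or_pos (A.N (σ u) k k) with h0 | h0
      · rw [h0, Nat.mul_zero] at h1'; omega
      · exact h0
    have hsq : ε (σ k) * ε (σ k) * A.N (σ u) k k = ε k * ε k * A.N (σ u) k k := by
      calc ε (σ k) * ε (σ k) * A.N (σ u) k k
          = ε (σ k) * (ε k * A.N u k k) := by rw [h3]; ring
        _ = ε k * (ε (σ k) * A.N u k k) := by ring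
        _ = ε k * ε k * A.N (σ u) k k := by rw [h1]; ring
    have := Nat.eq_of_mul_eq_mul_right hmpos hsq
    exact Nat.mul_self_inj.mp this
  have cycR : ∀ i j k, (ε k : ℝ) * (A.N i j k : ℝ) = (ε j : ℝ) * (A.N (σ i) k j : ℝ) := by
    intro i j k
    have := rel1 i j k
    rw [heps k] at this
    exact_mod_cast this
  -- expansion of products under φ
  have hprod : ∀ a b : ι, ∑ j : ι, (A.N a b j : ℝ) * φ (Finsupp.single j 1)
      = φ (Finsupp.single a 1) * φ (Finsupp.single b 1) := by
    intro a b
    have h := myphi_eq_sum hφ (A.mul (Finsupp.single a 1) (Finsupp.single b 1))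
    rw [hφ.map_mul] at h
    exact h.symm
  -- the eigenvalue equation
  have eigen : ∀ i k, ∑ j : ι, R j * (A.N i j k : ℝ)
      = φ (Finsupp.single (σ i) 1) * R k := by
    intro i k
    have hk := (hεpos k).ne'
    have hterm : ∀ j, R j * (A.N i j k : ℝ) * (ε k : ℝ)
        = (A.N (σ i) k j : ℝ) * φ (Finsupp.single j 1) := by
      intro j
      have hj := (hεpos j).ne'
      have hc := cycR i j k
      simp only [hR]
      field_simp
      linear_combination φ (Finsupp.single j 1) * hc
    have hsum : (∑ j : ι, R j * (A.N i j k : ℝ)) * (ε k : ℝ)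
        = φ (Finsupp.single (σ i) 1) * φ (Finsupp.single k 1) := by
      rw [Finset.sum_mul]
      rw [Finset.sum_congr rfl fun j _ => hterm j]
      exact hprod (σ i) k
    have h2 := eq_div_of_mul_eq hk hsum
    rw [h2, mul_div_assoc]
  -- φ(e_{σ i}) = φ(e_i)
  have hD : 0 < ∑ k : ι, R k * φ (Finsupp.single k 1) :=
    Finset.sum_pos (fun k _ => mul_pos (hRpos k) (hφ.pos k)) Finset.univ_nonempty
  have hpsi : ∀ i, φ (Finsupp.single (σ i) 1) = φ (Finsupp.single i 1) := by
    intro i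
    refine mul_right_cancel₀ hD.ne' ?_
    calc φ (Finsupp.single (σ i) 1) * ∑ k : ι, R k * φ (Finsupp.single k 1)
        = ∑ k : ι, φ (Finsupp.single (σ i) 1) * (R k * φ (Finsupp.single k 1)) := by
          rw [Finset.mul_sum]
      _ = ∑ k : ι, (∑ j : ι, R j * (A.N i j k : ℝ)) * φ (Finsupp.single k 1) := by
          refine Finset.sum_congr rfl fun k _ => ?_
          rw [eigen i k]; ring
      _ = ∑ k : ι, ∑ j : ι, R j * (A.N i j k : ℝ) * φ (Finsupp.single k 1) := by
          exact Finset.sum_congr rfl fun k _ => Finset.sum_mul _ _ _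
      _ = ∑ j : ι, ∑ k : ι, R j * (A.N i j k : ℝ) * φ (Finsupp.single k 1) :=
          Finset.sum_comm
      _ = ∑ j : ι, R j * (φ (Finsupp.single i 1) * φ (Finsupp.single j 1)) := by
          refine Finset.sum_congr rfl fun j _ => ?_
          simp only [_root_.mul_assoc]
          rw [← Finset.mul_sum, hprod i j]
      _ = φ (Finsupp.single i 1) * ∑ k : ι, R k * φ (Finsupp.single k 1) := by
          rw [Finset.mul_sum]
          exact Finset.sum_congr rfl fun j _ => by ring
  refine ⟨hRpos, ?_⟩
  intro a
  funext k
  show (∑ i : ι, ∑ j : ι, toRealVec a i * R j * (A.N i j k : ℝ)) = φ a * R k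
  have hrow : ∀ i : ι, ∑ j : ι, toRealVec a i * R j * (A.N i j k : ℝ)
      = (a i : ℝ) * φ (Finsupp.single i 1) * R k := by
    intro i
    have : ∑ j : ι, toRealVec a i * R j * (A.N i j k : ℝ)
        = toRealVec a i * ∑ j : ι, R j * (A.N i j k : ℝ) := by
      rw [Finset.mul_sum]
      exact Finset.sum_congr rfl fun j _ => by ring
    rw [this, eigen i k, hpsi i]
    simp only [toRealVec]
    ring
  calc (∑ i : ι, ∑ j : ι, toRealVec a i * R j * (A.N i j k : ℝ))
      = ∑ i : ι, (a i : ℝ) * φ (Finsupp.single i 1) * R k :=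
        Finset.sum_congr rfl fun i _ => hrow i
    _ = (∑ i : ι, (a i : ℝ) * φ (Finsupp.single i 1)) * R k := by rw [Finset.sum_mul]
    _ = φ a * R k := by rw [← myphi_eq_sum hφ a]
end

section
/- Let A = ι →₀ ℕ and B = κ →₀ ℕ be transitive finite-rank ℕSet algebras with Frobenius–Perron characters φ_A and φ_B, and let f : (ι →₀ ℕ) → (κ →₀ ℕ) be an additive map that is dominant (for every x ∈ κ there exists a ∈ ι →₀ ℕ with e_x ≤ f(a)). Suppose there exists an element D ∈ ι →₀ ℕ such that f(a) * f(b) = f(a * D * b) for all a, b ∈ ι →₀ ℕ. Then: (1) φ_B(f(a)) = φ_A(D)·φ_A(a) for all a ∈ ι →₀ ℕ; and (2) for any regular elements R_A of A and R_B of B, the ℝ-linear extension f_ℝ of f satisfies f_ℝ(R_A) = φ_A(D)·(φ̂_A(R_A)/φ̂_B(R_B)) • R_B. -/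
open Finsupp

section Aux
variable {ι : Type*} [Fintype ι]
set_option linter.unusedSectionVars false

lemma aux_map_zero {M : Type*} [AddCommMonoid M] [IsCancelAdd M] (g : (ι →₀ ℕ) → M)
    (hg : ∀ a b, g (a + b) = g a + g b) : g 0 = 0 := by
  have := hg 0 0
  simp only [add_zero] at this
  exact (left_eq_add.mp this)

lemma aux_map_sum {M : Type*} [AddCommMonoid M] [IsCancelAdd M] (g : (ι →₀ ℕ) → M)
    (hg : ∀ a b, g (a + b) = g a + g b) {α : Type*} (t : Finset α) (h : α → (ι →₀ ℕ)) :
    g (∑ i ∈ t, h i) = ∑ i ∈ t, g (h i) := by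
  classical
  induction t using Finset.induction_on with
  | empty => simpa using aux_map_zero g hg
  | insert a s hx ih => rw [Finset.sum_insert hx, hg, ih, Finset.sum_insert hx]

lemma aux_expand {M : Type*} [AddCommMonoid M] [IsCancelAdd M] (g : (ι →₀ ℕ) → M)
    (hg : ∀ a b, g (a + b) = g a + g b) (a : ι →₀ ℕ) :
    g a = ∑ i : ι, a i • g (Finsupp.single i 1) := by
  classical
  have hs : ∀ (n : ℕ) (i : ι), g (Finsupp.single i n) = n • g (Finsupp.single i 1) := by
    intro n i
    induction n with
    | zero => simpa using aux_map_zero g hg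
    | succ n ih =>
      rw [show (n + 1 : ℕ) = n + 1 from rfl, Finsupp.single_add, hg, ih, succ_nsmul]
  have ha : a = ∑ i : ι, Finsupp.single i (a i) := by
    ext k
    rw [Finsupp.finset_sum_apply]
    simp [Finsupp.single_apply]
  conv_lhs => rw [ha]
  rw [aux_map_sum g hg]
  exact Finset.sum_congr rfl fun i _ => hs (a i) i
end Aux

section Aux2
set_option linter.unusedSectionVars false
variable {ι : Type*} [Fintype ι]

lemma aux_single_le {a : ι →₀ ℕ} {i : ι} (h : a i ≠ 0) : Finsupp.single i 1 ≤ a := by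
  intro k
  classical
  rcases eq_or_ne k i with rfl | hk
  · simpa [Finsupp.single_apply] using Nat.one_le_iff_ne_zero.mpr h
  · simp [Finsupp.single_apply, Ne.symm hk]

lemma aux_exists_ne {a : ι →₀ ℕ} (h : a ≠ 0) : ∃ i, a i ≠ 0 := by
  by_contra hc
  push_neg at hc
  exact h (Finsupp.ext fun i => hc i)

namespace NSetAlgebra
variable (A : NSetAlgebra ι)

lemma mul_le_mul_right' {a b : ι →₀ ℕ} (h : a ≤ b) (c : ι →₀ ℕ) :
    A.mul a c ≤ A.mul b c := by
  obtain ⟨d, rfl⟩ := exists_add_of_le h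
  rw [A.right_distrib]
  exact le_self_add

lemma mul_le_mul_left' {a b : ι →₀ ℕ} (h : a ≤ b) (c : ι →₀ ℕ) :
    A.mul c a ≤ A.mul c b := by
  obtain ⟨d, rfl⟩ := exists_add_of_le h
  rw [A.left_distrib]
  exact le_self_add

lemma mul_sum_left {α : Type*} (t : Finset α) (h : α → (ι →₀ ℕ)) (b : ι →₀ ℕ) :
    A.mul (∑ i ∈ t, h i) b = ∑ i ∈ t, A.mul (h i) b :=
  aux_map_sum (fun x => A.mul x b) (fun x y => A.right_distrib x y b) t h

lemma mul_sum_right {α : Type*} (t : Finset α) (h : α → (ι →₀ ℕ)) (b : ι →₀ ℕ) :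
    A.mul b (∑ i ∈ t, h i) = ∑ i ∈ t, A.mul b (h i) :=
  aux_map_sum (fun x => A.mul b x) (fun x y => A.left_distrib b x y) t h

/-- key positivity: `(s * e_m) k ≥ 1` where `s = ∑ e_i`. -/
lemma s_mul_pos (hA : A.Transitive) (m k : ι) :
    1 ≤ (A.mul (∑ i : ι, Finsupp.single i 1) (Finsupp.single m 1)) k := by
  obtain ⟨u, hu⟩ := (hA m k).1
  have h1 : (1 : ℕ) ≤ (A.mul (Finsupp.single u 1) (Finsupp.single m 1)) k := by
    simpa [Finsupp.single_apply] using hu k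
  calc (1:ℕ) ≤ (A.mul (Finsupp.single u 1) (Finsupp.single m 1)) k := h1
    _ ≤ _ := by
        rw [A.mul_sum_left, Finsupp.finset_sum_apply]
        exact Finset.single_le_sum (f := fun i => (A.mul (Finsupp.single i 1) (Finsupp.single m 1)) k)
          (fun i _ => Nat.zero_le _) (Finset.mem_univ u)

end NSetAlgebra
end Aux2

section PF
variable {n : Type*} [Fintype n] [Nonempty n]

lemma pf_step (M : n → n → ℝ) (hM : ∀ i j, 0 < M i j) {v w : n → ℝ}
    (hv : ∀ i, 0 < v i) (hw : ∀ i, 0 < w i) {lv lw : ℝ}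
    (hev : ∀ i, ∑ j, M i j * v j = lv * v i)
    (hew : ∀ i, ∑ j, M i j * w j = lw * w i) :
    (∃ t : ℝ, 0 < t ∧ w = t • v) ∨ lv < lw := by
  obtain ⟨j₀, -, hmin⟩ := Finset.exists_min_image Finset.univ (fun j => w j / v j)
    Finset.univ_nonempty
  set t := w j₀ / v j₀ with htdef
  have ht : ∀ k, t * v k ≤ w k := by
    intro k
    have h := hmin k (Finset.mem_univ k)
    calc t * v k ≤ (w k / v k) * v k := by
          exact mul_le_mul_of_nonneg_right h (le_of_lt (hv k))
      _ = w k := div_mul_cancel₀ _ (ne_of_gt (hv k))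
  have htj : t * v j₀ = w j₀ := div_mul_cancel₀ _ (ne_of_gt (hv j₀))
  have htpos : 0 < t := div_pos (hw j₀) (hv j₀)
  by_cases hcase : ∀ k, w k = t * v k
  · exact Or.inl ⟨t, htpos, funext fun k => by rw [hcase k]; simp [mul_comm]⟩
  · right
    push_neg at hcase
    obtain ⟨k₁, hk₁⟩ := hcase
    have hk₁' : t * v k₁ < w k₁ := lt_of_le_of_ne (ht k₁) (fun h => hk₁ h.symm)
    have key : ∑ j, M j₀ j * (t * v j) < ∑ j, M j₀ j * w j := by
      refine Finset.sum_lt_sum (fun j _ => mul_le_mul_of_nonneg_left (ht j) (le_of_lt (hM j₀ j)))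
        ⟨k₁, Finset.mem_univ k₁, mul_lt_mul_of_pos_left hk₁' (hM j₀ k₁)⟩
    have hL : ∑ j, M j₀ j * (t * v j) = lv * w j₀ := by
      calc ∑ j, M j₀ j * (t * v j) = t * ∑ j, M j₀ j * v j := by
            rw [Finset.mul_sum]; exact Finset.sum_congr rfl fun j _ => by ring
        _ = t * (lv * v j₀) := by rw [hev j₀]
        _ = lv * (t * v j₀) := by ring
        _ = lv * w j₀ := by rw [htj]
    rw [hL, hew j₀] at key
    exact lt_of_mul_lt_mul_right key (hw j₀).le

lemma pf_unique (M : n → n → ℝ) (hM : ∀ i j, 0 < M i j) {v w : n → ℝ}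
    (hv : ∀ i, 0 < v i) (hw : ∀ i, 0 < w i) {lv lw : ℝ}
    (hev : ∀ i, ∑ j, M i j * v j = lv * v i)
    (hew : ∀ i, ∑ j, M i j * w j = lw * w i) :
    ∃ t : ℝ, 0 < t ∧ w = t • v := by
  rcases pf_step M hM hv hw hev hew with h | h
  · exact h
  rcases pf_step M hM hw hv hew hev with h2 | h2
  · obtain ⟨t, ht, hvw⟩ := h2
    refine ⟨t⁻¹, inv_pos.mpr ht, funext fun k => ?_⟩
    have := congrFun hvw k
    simp only [Pi.smul_apply, smul_eq_mul] at this ⊢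
    rw [this]
    field_simp
  · exact absurd h2 (not_lt.mpr h.le)

lemma aux_single_mul_sum {κ : Type*} [Fintype κ] (g : κ → ℝ) (x : κ) :
    ∑ i : κ, ((Finsupp.single x (1:ℕ)) i : ℝ) * g i = g x := by
  classical
  rw [Finset.sum_eq_single x]
  · simp
  · intro b _ hbx; simp [Finsupp.single_eq_of_ne' (Ne.symm hbx)]
  · intro h; exact absurd (Finset.mem_univ x) h
end PF

section Reg
variable {n : Type*} [Fintype n]

lemma aux_reg (C : NSetAlgebra n) (φ : (n →₀ ℕ) → ℝ) (R : n → ℝ)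
    (hreg : C.IsRegular φ R) (x y : n) :
    ∑ z : n, R z * ((C.mul (Finsupp.single x 1) (Finsupp.single z 1)) y : ℝ)
      = φ (Finsupp.single x 1) * R y := by
  classical
  have h := congrFun (hreg.2 x) y
  simp only [NSetAlgebra.starMul, NSetAlgebra.N, Pi.smul_apply, smul_eq_mul] at h
  rw [← h]
  calc ∑ z : n, R z * ((C.mul (Finsupp.single x 1) (Finsupp.single z 1)) y : ℝ)
      = ∑ i : n, ((Finsupp.single x (1:ℕ)) i : ℝ) *
          (∑ j : n, R j * ((C.mul (Finsupp.single i 1) (Finsupp.single j 1)) y : ℝ)) := by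
        rw [aux_single_mul_sum
          (fun i => ∑ j : n, R j * ((C.mul (Finsupp.single i 1) (Finsupp.single j 1)) y : ℝ)) x]
    _ = ∑ i : n, ∑ j : n, ((Finsupp.single x (1:ℕ)) i : ℝ) * R j *
          ((C.mul (Finsupp.single i 1) (Finsupp.single j 1)) y : ℝ) := by
        refine Finset.sum_congr rfl fun i _ => ?_
        rw [Finset.mul_sum]
        exact Finset.sum_congr rfl fun j _ => by ring

lemma aux_reg2 (C : NSetAlgebra n) (φ : (n →₀ ℕ) → ℝ) (R : n → ℝ)
    (hreg : C.IsRegular φ R) (hadd' : ∀ a b, φ (a + b) = φ a + φ b) (b : n →₀ ℕ) (y : n) :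
    ∑ z : n, R z * ((C.mul b (Finsupp.single z 1)) y : ℝ) = φ b * R y := by
  classical
  have hexp : ∀ z, ((C.mul b (Finsupp.single z 1)) y : ℝ)
      = ∑ x : n, (b x : ℝ) * ((C.mul (Finsupp.single x 1) (Finsupp.single z 1)) y : ℝ) := by
    intro z
    conv_lhs => rw [aux_expand (fun c => C.mul c (Finsupp.single z 1))
      (fun c d => C.right_distrib c d _) b]
    rw [Finsupp.finset_sum_apply, Nat.cast_sum]
    exact Finset.sum_congr rfl fun x _ => by rw [Finsupp.smul_apply, smul_eq_mul, Nat.cast_mul]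
  calc ∑ z : n, R z * ((C.mul b (Finsupp.single z 1)) y : ℝ)
      = ∑ z : n, ∑ x : n, (b x : ℝ) *
          (R z * ((C.mul (Finsupp.single x 1) (Finsupp.single z 1)) y : ℝ)) := by
        refine Finset.sum_congr rfl fun z _ => ?_
        rw [hexp z, Finset.mul_sum]
        exact Finset.sum_congr rfl fun x _ => by ring
    _ = ∑ x : n, (b x : ℝ) *
          ∑ z : n, R z * ((C.mul (Finsupp.single x 1) (Finsupp.single z 1)) y : ℝ) := by
        rw [Finset.sum_comm]
        exact Finset.sum_congr rfl fun x _ => (Finset.mul_sum _ _ _).symm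
    _ = ∑ x : n, (b x : ℝ) * (φ (Finsupp.single x 1) * R y) := by
        exact Finset.sum_congr rfl fun x _ => by rw [aux_reg C φ R hreg x y]
    _ = φ b * R y := by
        rw [aux_expand φ hadd' b, Finset.sum_mul]
        refine (Finset.sum_congr rfl fun x _ => ?_).symm
        rw [nsmul_eq_mul]; ring
end Reg

open NSetAlgebra in
/-- If `f : A → B` is additive and dominant and there is `D` with
`f(a) * f(b) = f(a * D * b)`, then `φ_B(f(a)) = φ_A(D)·φ_A(a)` and
`f_ℝ(R_A) = φ_A(D)·(φ̂_A(R_A)/φ̂_B(R_B)) • R_B`. -/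
theorem stmt1 {ι κ : Type*} [Fintype ι] [Nonempty ι] [Fintype κ] [Nonempty κ]
    (A : NSetAlgebra ι) (B : NSetAlgebra κ) (hA : A.Transitive) (hB : B.Transitive)
    (φA : (ι →₀ ℕ) → ℝ) (φB : (κ →₀ ℕ) → ℝ)
    (hφA : A.IsFPCharacter φA) (hφB : B.IsFPCharacter φB)
    (f : (ι →₀ ℕ) → (κ →₀ ℕ))
    (hadd : ∀ a b, f (a + b) = f a + f b)
    (hdom : ∀ x : κ, ∃ a, Finsupp.single x 1 ≤ f a)
    (D : ι →₀ ℕ)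
    (hD : ∀ a b, B.mul (f a) (f b) = f (A.mul (A.mul a D) b)) :
    (∀ a, φB (f a) = φA D * φA a) ∧
    (∀ RA RB, A.IsRegular φA RA → B.IsRegular φB RB →
      linExt f RA =
        (φA D * ((∑ i : ι, RA i * φA (Finsupp.single i 1)) /
          (∑ x : κ, RB x * φB (Finsupp.single x 1)))) • RB) := by
  classical
  -- basic zero/expansion facts
  have hf0 : f 0 = 0 := aux_map_zero f hadd
  have hφA0 : φA 0 = 0 := aux_map_zero φA hφA.map_add
  have hφB0 : φB 0 = 0 := aux_map_zero φB hφB.map_add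
  have hψadd : ∀ a b : ι →₀ ℕ, φB (f (a + b)) = φB (f a) + φB (f b) := by
    intro a b; rw [hadd, hφB.map_add]
  have hφAexp : ∀ a : ι →₀ ℕ, φA a = ∑ i : ι, (a i : ℝ) * φA (Finsupp.single i 1) := by
    intro a
    rw [aux_expand φA hφA.map_add a]
    exact Finset.sum_congr rfl fun i _ => nsmul_eq_mul _ _
  have hφBexp : ∀ b : κ →₀ ℕ, φB b = ∑ x : κ, (b x : ℝ) * φB (Finsupp.single x 1) := by
    intro b
    rw [aux_expand φB hφB.map_add b]
    exact Finset.sum_congr rfl fun x _ => nsmul_eq_mul _ _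
  have hψexp : ∀ a : ι →₀ ℕ, φB (f a) = ∑ i : ι, (a i : ℝ) * φB (f (Finsupp.single i 1)) := by
    intro a
    rw [aux_expand (fun a => φB (f a)) hψadd a]
    exact Finset.sum_congr rfl fun i _ => nsmul_eq_mul _ _
  have hfapp : ∀ (a : ι →₀ ℕ) (x : κ), (f a) x = ∑ i : ι, a i * (f (Finsupp.single i 1)) x := by
    intro a x
    conv_lhs => rw [aux_expand f hadd a]
    rw [Finsupp.finset_sum_apply]
    exact Finset.sum_congr rfl fun i _ => by simp
  have hφBnn : ∀ b : κ →₀ ℕ, 0 ≤ φB b := fun b => by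
    rw [hφBexp b]
    exact Finset.sum_nonneg fun x _ => mul_nonneg (Nat.cast_nonneg _) (hφB.pos x).le
  have hφBpos : ∀ b : κ →₀ ℕ, b ≠ 0 → 0 < φB b := by
    intro b hb
    obtain ⟨x, hx⟩ := aux_exists_ne hb
    rw [hφBexp b]
    refine Finset.sum_pos' (fun y _ => mul_nonneg (Nat.cast_nonneg _) (hφB.pos y).le)
      ⟨x, Finset.mem_univ x, mul_pos ?_ (hφB.pos x)⟩
    exact_mod_cast Nat.pos_of_ne_zero hx
  have hφBmono : ∀ {a b : κ →₀ ℕ}, a ≤ b → φB a ≤ φB b := by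
    intro a b h
    obtain ⟨c, rfl⟩ := exists_add_of_le h
    rw [hφB.map_add]
    linarith [hφBnn c]
  have hfmono : ∀ {a b : ι →₀ ℕ}, a ≤ b → f a ≤ f b := by
    intro a b h
    obtain ⟨c, rfl⟩ := exists_add_of_le h
    rw [hadd]
    exact le_self_add
  -- D ≠ 0
  have hDne : D ≠ 0 := by
    rintro rfl
    obtain ⟨x⟩ := (inferInstance : Nonempty κ)
    obtain ⟨a, ha⟩ := hdom x
    have h0 : B.mul (f a) (f a) = 0 := by
      rw [hD, A.mul_zero, A.zero_mul, hf0]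
    have hle : φB (B.mul (Finsupp.single x 1) (Finsupp.single x 1)) ≤ φB (B.mul (f a) (f a)) :=
      hφBmono (le_trans (B.mul_le_mul_right' ha _) (B.mul_le_mul_left' ha _))
    rw [h0, hφB0, hφB.map_mul] at hle
    nlinarith [hφB.pos x]
  -- f is nonzero on simples
  have hfne : ∀ i, f (Finsupp.single i 1) ≠ 0 := by
    intro i0 hfi
    obtain ⟨d, hd⟩ := aux_exists_ne hDne
    have hdle : Finsupp.single d 1 ≤ D := aux_single_le hd
    have hall : ∀ j, f (Finsupp.single j 1) = 0 := by
      intro j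
      obtain ⟨v, hv⟩ := (hA i0 j).2
      obtain ⟨v', hv'⟩ := (hA d v).2
      have hle : Finsupp.single j 1 ≤
          A.mul (A.mul (Finsupp.single i0 1) D) (Finsupp.single v' 1) := by
        calc Finsupp.single j 1 ≤ A.mul (Finsupp.single i0 1) (Finsupp.single v 1) := hv
          _ ≤ A.mul (Finsupp.single i0 1) (A.mul (Finsupp.single d 1) (Finsupp.single v' 1)) :=
              A.mul_le_mul_left' hv' _
          _ ≤ A.mul (Finsupp.single i0 1) (A.mul D (Finsupp.single v' 1)) :=
              A.mul_le_mul_left' (A.mul_le_mul_right' hdle _) _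
          _ = A.mul (A.mul (Finsupp.single i0 1) D) (Finsupp.single v' 1) :=
              (A.mul_assoc _ _ _).symm
      have h0 : f (A.mul (A.mul (Finsupp.single i0 1) D) (Finsupp.single v' 1)) = 0 := by
        rw [← hD, hfi, B.zero_mul]
      have hle2 : f (Finsupp.single j 1) ≤ 0 := h0 ▸ hfmono hle
      exact le_antisymm hle2 zero_le
    obtain ⟨x⟩ := (inferInstance : Nonempty κ)
    obtain ⟨a, ha⟩ := hdom x
    have hfa : (f a) x = 0 := by
      rw [hfapp]
      exact Finset.sum_eq_zero fun i _ => by rw [hall i]; simp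
    have := ha x
    simp [Finsupp.single_apply, hfa] at this
  have hψpos : ∀ i, 0 < φB (f (Finsupp.single i 1)) := fun i => hφBpos _ (hfne i)
  -- Part 1 via Perron-Frobenius uniqueness
  have hM1pos : ∀ j k : ι, (0:ℝ) <
      ((A.mul (A.mul (∑ i : ι, Finsupp.single i 1) D) (Finsupp.single j 1)) k : ℝ) := by
    intro j k
    obtain ⟨d, hd⟩ := aux_exists_ne hDne
    have hdle : Finsupp.single d 1 ≤ D := aux_single_le hd
    have hne : A.mul (Finsupp.single d 1) (Finsupp.single j 1) ≠ 0 := by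
      intro h
      have h2 := hφA.map_mul (Finsupp.single d 1) (Finsupp.single j 1)
      rw [h, hφA0] at h2
      nlinarith [hφA.pos d, hφA.pos j]
    obtain ⟨m, hm⟩ := aux_exists_ne hne
    have hmle : Finsupp.single m 1 ≤ A.mul (Finsupp.single d 1) (Finsupp.single j 1) :=
      aux_single_le hm
    have hchain : A.mul (∑ i : ι, Finsupp.single i 1) (Finsupp.single m 1) ≤
        A.mul (A.mul (∑ i : ι, Finsupp.single i 1) D) (Finsupp.single j 1) := by
      calc A.mul (∑ i : ι, Finsupp.single i 1) (Finsupp.single m 1)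
          ≤ A.mul (∑ i : ι, Finsupp.single i 1)
              (A.mul (Finsupp.single d 1) (Finsupp.single j 1)) := A.mul_le_mul_left' hmle _
        _ ≤ A.mul (∑ i : ι, Finsupp.single i 1) (A.mul D (Finsupp.single j 1)) :=
            A.mul_le_mul_left' (A.mul_le_mul_right' hdle _) _
        _ = A.mul (A.mul (∑ i : ι, Finsupp.single i 1) D) (Finsupp.single j 1) :=
            (A.mul_assoc _ _ _).symm
    have h1 : (1:ℕ) ≤ (A.mul (A.mul (∑ i : ι, Finsupp.single i 1) D) (Finsupp.single j 1)) k :=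
      le_trans (A.s_mul_pos hA m k) (hchain k)
    exact_mod_cast lt_of_lt_of_le Nat.zero_lt_one h1
  have heigv : ∀ j : ι, ∑ k : ι,
      ((A.mul (A.mul (∑ i : ι, Finsupp.single i 1) D) (Finsupp.single j 1)) k : ℝ) *
        φA (Finsupp.single k 1)
      = ((∑ i : ι, φA (Finsupp.single i 1)) * φA D) * φA (Finsupp.single j 1) := by
    intro j
    rw [← hφAexp (A.mul (A.mul (∑ i : ι, Finsupp.single i 1) D) (Finsupp.single j 1)),
      hφA.map_mul, hφA.map_mul,
      aux_map_sum φA hφA.map_add Finset.univ (fun i => Finsupp.single i 1)]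
  have heigw : ∀ j : ι, ∑ k : ι,
      ((A.mul (A.mul (∑ i : ι, Finsupp.single i 1) D) (Finsupp.single j 1)) k : ℝ) *
        φB (f (Finsupp.single k 1))
      = (∑ i : ι, φB (f (Finsupp.single i 1))) * φB (f (Finsupp.single j 1)) := by
    intro j
    rw [← hψexp (A.mul (A.mul (∑ i : ι, Finsupp.single i 1) D) (Finsupp.single j 1))]
    rw [A.mul_sum_left Finset.univ (fun i => Finsupp.single i 1) D, A.mul_sum_left,
      aux_map_sum (fun a => φB (f a)) hψadd, Finset.sum_mul]
    exact Finset.sum_congr rfl fun i _ => by rw [← hD, hφB.map_mul]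
  obtain ⟨t, htpos, htw⟩ := pf_unique _ hM1pos (fun i => hφA.pos i) hψpos heigv heigw
  have hψt : ∀ a : ι →₀ ℕ, φB (f a) = t * φA a := by
    intro a
    rw [hψexp a, hφAexp a, Finset.mul_sum]
    refine Finset.sum_congr rfl fun k _ => ?_
    have hk := congrFun htw k
    simp only [Pi.smul_apply, smul_eq_mul] at hk
    rw [hk]; ring
  have ht1 : t = φA D := by
    have h1 : φB (f A.one) = t := by rw [hψt, hφA.map_one, _root_.mul_one]
    have h2 : φB (f A.one) * φB (f A.one) = φB (f D) := by
      rw [← hφB.map_mul, hD, A.one_mul, A.mul_one]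
    rw [h1, hψt D] at h2
    exact (mul_left_cancel₀ (ne_of_gt htpos) h2)
  have part1 : ∀ a, φB (f a) = φA D * φA a := fun a => by rw [hψt, ht1]
  refine ⟨part1, ?_⟩
  intro RA RB hRA hRB
  have hcov : ∀ x : κ, ∃ i, (f (Finsupp.single i 1)) x ≠ 0 := by
    intro x
    obtain ⟨a, ha⟩ := hdom x
    have h1 : 1 ≤ (f a) x := by simpa [Finsupp.single_apply] using ha x
    rw [hfapp] at h1
    by_contra hc
    push_neg at hc
    rw [Finset.sum_eq_zero (fun i _ => by rw [hc i, Nat.mul_zero])] at h1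
    omega
  have hrpos : ∀ x : κ, 0 < ∑ i : ι, RA i * ((f (Finsupp.single i 1)) x : ℝ) := by
    intro x
    obtain ⟨i, hi⟩ := hcov x
    refine Finset.sum_pos' (fun i _ => mul_nonneg (hRA.1 i).le (Nat.cast_nonneg _))
      ⟨i, Finset.mem_univ i, mul_pos (hRA.1 i) ?_⟩
    exact_mod_cast Nat.pos_of_ne_zero hi
  set F : κ →₀ ℕ := ∑ j : ι, f (Finsupp.single j 1) with hFdef
  have hFge : (∑ x : κ, Finsupp.single x 1) ≤ F := by
    intro z
    obtain ⟨i, hi⟩ := hcov z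
    have h2 : (f (Finsupp.single i 1)) z ≤ F z := by
      rw [hFdef, Finsupp.finset_sum_apply]
      exact Finset.single_le_sum (f := fun j => (f (Finsupp.single j 1)) z)
        (fun _ _ => Nat.zero_le _) (Finset.mem_univ i)
    have h1 : (∑ x : κ, Finsupp.single x (1:ℕ)) z = 1 := by
      rw [Finsupp.finset_sum_apply]; simp [Finsupp.single_apply]
    rw [h1]
    omega
  have hM2pos : ∀ y x : κ, (0:ℝ) < ((B.mul F (Finsupp.single x 1)) y : ℝ) := by
    intro y x
    have h1 : (1:ℕ) ≤ (B.mul (∑ x' : κ, Finsupp.single x' 1) (Finsupp.single x 1)) y :=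
      B.s_mul_pos hB x y
    have h2 := (B.mul_le_mul_right' hFge (Finsupp.single x 1)) y
    exact_mod_cast lt_of_lt_of_le Nat.zero_lt_one (le_trans h1 h2)
  have heigRB : ∀ y : κ, ∑ x : κ, ((B.mul F (Finsupp.single x 1)) y : ℝ) * RB x
      = φB F * RB y := by
    intro y
    rw [← aux_reg2 B φB RB hRB hφB.map_add F y]
    exact Finset.sum_congr rfl fun x _ => mul_comm _ _
  have hstar : ∀ (c : ι →₀ ℕ) (y : κ),
      ∑ i : ι, RA i * ((f (A.mul c (Finsupp.single i 1))) y : ℝ)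
        = φA c * ∑ i : ι, RA i * ((f (Finsupp.single i 1)) y : ℝ) := by
    intro c y
    have hfc : ∀ i, ((f (A.mul c (Finsupp.single i 1))) y : ℝ)
        = ∑ k : ι, ((A.mul c (Finsupp.single i 1)) k : ℝ) * ((f (Finsupp.single k 1)) y : ℝ) := by
      intro i
      rw [hfapp (A.mul c (Finsupp.single i 1)) y, Nat.cast_sum]
      exact Finset.sum_congr rfl fun k _ => by rw [Nat.cast_mul]
    calc ∑ i : ι, RA i * ((f (A.mul c (Finsupp.single i 1))) y : ℝ)
        = ∑ i : ι, ∑ k : ι, RA i *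
            (((A.mul c (Finsupp.single i 1)) k : ℝ) * ((f (Finsupp.single k 1)) y : ℝ)) := by
          refine Finset.sum_congr rfl fun i _ => ?_
          rw [hfc i, Finset.mul_sum]
      _ = ∑ k : ι, (∑ i : ι, RA i * ((A.mul c (Finsupp.single i 1)) k : ℝ)) *
            ((f (Finsupp.single k 1)) y : ℝ) := by
          rw [Finset.sum_comm]
          refine Finset.sum_congr rfl fun k _ => ?_
          rw [Finset.sum_mul]
          exact Finset.sum_congr rfl fun i _ => by ring
      _ = ∑ k : ι, (φA c * RA k) * ((f (Finsupp.single k 1)) y : ℝ) := by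
          refine Finset.sum_congr rfl fun k _ => ?_
          rw [aux_reg2 A φA RA hRA hφA.map_add c k]
      _ = φA c * ∑ i : ι, RA i * ((f (Finsupp.single i 1)) y : ℝ) := by
          rw [Finset.mul_sum]
          exact Finset.sum_congr rfl fun k _ => by ring
  have hexp2 : ∀ (c : κ →₀ ℕ) (y : κ), ((B.mul F c) y : ℝ)
      = ∑ x : κ, (c x : ℝ) * ((B.mul F (Finsupp.single x 1)) y : ℝ) := by
    intro c y
    conv_lhs => rw [aux_expand (fun c => B.mul F c) (fun c d => B.left_distrib F c d) c]
    rw [Finsupp.finset_sum_apply, Nat.cast_sum]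
    exact Finset.sum_congr rfl fun x _ => by rw [Finsupp.smul_apply, smul_eq_mul, Nat.cast_mul]
  have hFmul : ∀ i : ι, B.mul F (f (Finsupp.single i 1))
      = ∑ j : ι, f (A.mul (A.mul (Finsupp.single j 1) D) (Finsupp.single i 1)) := by
    intro i
    rw [hFdef, B.mul_sum_left]
    exact Finset.sum_congr rfl fun j _ => hD _ _
  have heigr : ∀ y : κ, ∑ x : κ, ((B.mul F (Finsupp.single x 1)) y : ℝ) *
        (∑ i : ι, RA i * ((f (Finsupp.single i 1)) x : ℝ))
      = ((∑ j : ι, φA (Finsupp.single j 1)) * φA D) *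
        (∑ i : ι, RA i * ((f (Finsupp.single i 1)) y : ℝ)) := by
    intro y
    calc ∑ x : κ, ((B.mul F (Finsupp.single x 1)) y : ℝ) *
          (∑ i : ι, RA i * ((f (Finsupp.single i 1)) x : ℝ))
        = ∑ x : κ, ∑ i : ι, RA i *
            (((f (Finsupp.single i 1)) x : ℝ) * ((B.mul F (Finsupp.single x 1)) y : ℝ)) := by
          refine Finset.sum_congr rfl fun x _ => ?_
          rw [Finset.mul_sum]
          exact Finset.sum_congr rfl fun i _ => by ring
      _ = ∑ i : ι, RA i * ∑ x : κ,
            ((f (Finsupp.single i 1)) x : ℝ) * ((B.mul F (Finsupp.single x 1)) y : ℝ) := by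
          rw [Finset.sum_comm]
          exact Finset.sum_congr rfl fun i _ => (Finset.mul_sum _ _ _).symm
      _ = ∑ i : ι, RA i * ((B.mul F (f (Finsupp.single i 1))) y : ℝ) := by
          exact Finset.sum_congr rfl fun i _ => by rw [hexp2 (f (Finsupp.single i 1)) y]
      _ = ∑ i : ι, RA i * ∑ j : ι,
            ((f (A.mul (A.mul (Finsupp.single j 1) D) (Finsupp.single i 1))) y : ℝ) := by
          refine Finset.sum_congr rfl fun i _ => ?_
          rw [hFmul i, Finsupp.finset_sum_apply, Nat.cast_sum]
      _ = ∑ j : ι, ∑ i : ι, RA i *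
            ((f (A.mul (A.mul (Finsupp.single j 1) D) (Finsupp.single i 1))) y : ℝ) := by
          rw [Finset.sum_comm]
          exact Finset.sum_congr rfl fun i _ => Finset.mul_sum _ _ _
      _ = ∑ j : ι, φA (A.mul (Finsupp.single j 1) D) *
            (∑ i : ι, RA i * ((f (Finsupp.single i 1)) y : ℝ)) := by
          exact Finset.sum_congr rfl fun j _ => hstar (A.mul (Finsupp.single j 1) D) y
      _ = ((∑ j : ι, φA (Finsupp.single j 1)) * φA D) *
            (∑ i : ι, RA i * ((f (Finsupp.single i 1)) y : ℝ)) := by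
          rw [← Finset.sum_mul]
          congr 1
          rw [Finset.sum_mul]
          exact Finset.sum_congr rfl fun j _ => hφA.map_mul _ _
  obtain ⟨t2, ht2pos, ht2⟩ := pf_unique (fun y x => ((B.mul F (Finsupp.single x 1)) y : ℝ))
    hM2pos hRB.1 hrpos heigRB heigr
  have hSB : 0 < ∑ x : κ, RB x * φB (Finsupp.single x 1) :=
    Finset.sum_pos (fun x _ => mul_pos (hRB.1 x) (hφB.pos x)) Finset.univ_nonempty
  have hsum : ∑ x : κ, (∑ i : ι, RA i * ((f (Finsupp.single i 1)) x : ℝ)) *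
        φB (Finsupp.single x 1)
      = φA D * ∑ i : ι, RA i * φA (Finsupp.single i 1) := by
    calc ∑ x : κ, (∑ i : ι, RA i * ((f (Finsupp.single i 1)) x : ℝ)) * φB (Finsupp.single x 1)
        = ∑ x : κ, ∑ i : ι, RA i *
            (((f (Finsupp.single i 1)) x : ℝ) * φB (Finsupp.single x 1)) := by
          refine Finset.sum_congr rfl fun x _ => ?_
          rw [Finset.sum_mul]
          exact Finset.sum_congr rfl fun i _ => by ring
      _ = ∑ i : ι, RA i * ∑ x : κ,
            ((f (Finsupp.single i 1)) x : ℝ) * φB (Finsupp.single x 1) := by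
          rw [Finset.sum_comm]
          exact Finset.sum_congr rfl fun i _ => (Finset.mul_sum _ _ _).symm
      _ = ∑ i : ι, RA i * φB (f (Finsupp.single i 1)) := by
          exact Finset.sum_congr rfl fun i _ => by rw [← hφBexp (f (Finsupp.single i 1))]
      _ = ∑ i : ι, RA i * (φA D * φA (Finsupp.single i 1)) := by
          exact Finset.sum_congr rfl fun i _ => by rw [part1]
      _ = φA D * ∑ i : ι, RA i * φA (Finsupp.single i 1) := by
          rw [Finset.mul_sum]
          exact Finset.sum_congr rfl fun i _ => by ring
  have hT : t2 * (∑ x : κ, RB x * φB (Finsupp.single x 1))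
      = φA D * ∑ i : ι, RA i * φA (Finsupp.single i 1) := by
    rw [← hsum, Finset.mul_sum]
    refine Finset.sum_congr rfl fun x _ => ?_
    have hx := congrFun ht2 x
    simp only [Pi.smul_apply, smul_eq_mul] at hx
    rw [hx]
    ring
  have ht2val : t2 = φA D * ((∑ i : ι, RA i * φA (Finsupp.single i 1)) /
      (∑ x : κ, RB x * φB (Finsupp.single x 1))) := by
    rw [eq_comm, mul_div_assoc', div_eq_iff (ne_of_gt hSB), eq_comm]
    exact hT
  show (fun x : κ => ∑ i : ι, RA i * ((f (Finsupp.single i 1)) x : ℝ)) = _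
  rw [ht2, ht2val]
end

section
/- Let A = ι →₀ ℕ and B = κ →₀ ℕ be transitive finite-rank ℕSet algebras with Frobenius–Perron characters φ_A, φ_B. Suppose ε_A : ι → ℕ and ε_B : κ → ℕ take values ≥ 1 and are such that R_A(i) := φ_A(e_i)/ε_A(i) is a regular element of A and R_B(x) := φ_B(e_x)/ε_B(x) is a regular element of B. Define FPdim(A) := Σ_{i∈ι} φ_A(e_i)²/ε_A(i) and FPdim(B) := Σ_{x∈κ} φ_B(e_x)²/ε_B(x), and let d_A, d_B be positive natural numbers. Let f : (ι →₀ ℕ) → (κ →₀ ℕ) be additive and dominant (for every x ∈ κ there exists a with e_x ≤ f(a)) and suppose there exists D ∈ ι →₀ ℕ with f(a) * f(b) = f(a * D * b) for all a, b. Let g : (κ →₀ ℕ) → (ι →₀ ℕ) be an additive map satisfying the adjointness relation d_A·ε_A(i)·(g(e_x))(i) = d_B·ε_B(x)·(f(e_i))(x) for all i ∈ ι and x ∈ κ. Then for every b ∈ κ →₀ ℕ one has φ_A(g(b)) = φ_A(D)·(d_B/d_A)·(FPdim(A)/FPdim(B))·φ_B(b). (In the paper, f and g are induced by a dominant functor F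 : 𝒜 → ℬ between fusion categories and its left or right adjoint I, d_𝒜 and d_ℬ are the endomorphism degrees, and ε is given by dim_E End of simple objects.) -/
open Finsupp

section FPHelpers

lemma sum_single_eq' {ι : Type*} [Fintype ι] (a : ι →₀ ℕ) :
    ∑ i : ι, Finsupp.single i (a i) = a := by
  ext k
  rw [Finsupp.finset_sum_apply]
  rw [Finset.sum_eq_single k]
  · simp
  · intro b _ hb; exact Finsupp.single_eq_of_ne' hb
  · intro hk; exact absurd (Finset.mem_univ k) hk

lemma addext {ι : Type*} [Fintype ι] (h : (ι →₀ ℕ) → ℝ)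
    (hadd : ∀ a b, h (a + b) = h a + h b) (a : ι →₀ ℕ) :
    h a = ∑ i : ι, (a i : ℝ) * h (Finsupp.single i 1) := by
  let F : (ι →₀ ℕ) →+ ℝ := AddMonoidHom.mk' h hadd
  have h1 : ∀ i : ι, Finsupp.single i (a i) = (a i) • Finsupp.single i 1 := by
    intro i; rw [Finsupp.smul_single]; simp
  calc h a = F a := rfl
    _ = F (∑ i : ι, Finsupp.single i (a i)) := by rw [sum_single_eq']
    _ = ∑ i : ι, F (Finsupp.single i (a i)) := map_sum F _ _
    _ = ∑ i : ι, (a i : ℝ) * h (Finsupp.single i 1) := by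
        refine Finset.sum_congr rfl fun i _ => ?_
        rw [h1 i, map_nsmul, nsmul_eq_mul]; rfl

lemma mul_coord {ι : Type*} [Fintype ι] (A : NSetAlgebra ι) (a b : ι →₀ ℕ) (k : ι) :
    ((A.mul a b) k : ℝ) = ∑ i : ι, ∑ j : ι, (a i : ℝ) * (b j : ℝ) * (A.N i j k : ℝ) := by
  have hb : ((A.mul a b) k : ℝ)
      = ∑ j : ι, (b j : ℝ) * ((A.mul a (Finsupp.single j 1)) k : ℝ) :=
    addext (fun u => ((A.mul a u) k : ℝ))
      (fun u v => by rw [A.left_distrib]; push_cast [Finsupp.add_apply]; ring) b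
  rw [hb]
  conv_rhs => rw [Finset.sum_comm]
  refine Finset.sum_congr rfl fun j _ => ?_
  have ha : ((A.mul a (Finsupp.single j 1)) k : ℝ)
      = ∑ i : ι, (a i : ℝ) * (A.N i j k : ℝ) :=
    addext (fun u => ((A.mul u (Finsupp.single j 1)) k : ℝ))
      (fun u v => by rw [A.right_distrib]; push_cast [Finsupp.add_apply]; ring) a
  rw [ha, Finset.mul_sum]
  exact Finset.sum_congr rfl fun i _ => by ring

lemma reg_ext {ι : Type*} [Fintype ι] (A : NSetAlgebra ι) (φ : (ι →₀ ℕ) → ℝ)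
    (hφadd : ∀ a b, φ (a + b) = φ a + φ b) (R : ι → ℝ)
    (hR : ∀ i, A.starMul (fun k => ((Finsupp.single i 1 : ι →₀ ℕ) k : ℝ)) R
      = φ (Finsupp.single i 1) • R) (c : ι →₀ ℕ) (k : ι) :
    ∑ p : ι, ∑ j : ι, (c p : ℝ) * R j * (A.N p j k : ℝ) = φ c * R k := by
  have hrow : ∀ p : ι, ∑ j : ι, R j * (A.N p j k : ℝ) = φ (Finsupp.single p 1) * R k := by
    intro p
    have h := congrFun (hR p) k
    simp only [NSetAlgebra.starMul, Pi.smul_apply, smul_eq_mul] at h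
    rw [Finset.sum_eq_single p] at h
    · simpa using h
    · intro i _ hip
      have h0 : ((Finsupp.single p 1 : ι →₀ ℕ) i : ℝ) = 0 := by
        simp [Finsupp.single_apply, (Ne.symm hip)]
      simp [h0]
    · intro hk; exact absurd (Finset.mem_univ p) hk
  calc ∑ p : ι, ∑ j : ι, (c p : ℝ) * R j * (A.N p j k : ℝ)
      = ∑ p : ι, (c p : ℝ) * (φ (Finsupp.single p 1) * R k) := by
        refine Finset.sum_congr rfl fun p _ => ?_
        rw [← hrow p, Finset.mul_sum]
        exact Finset.sum_congr rfl fun j _ => by ring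
    _ = (∑ p : ι, (c p : ℝ) * φ (Finsupp.single p 1)) * R k := by
        rw [Finset.sum_mul]; exact Finset.sum_congr rfl fun p _ => by ring
    _ = φ c * R k := by rw [← addext φ hφadd c]

lemma perronUniq {κ : Type*} [Fintype κ] [Nonempty κ] (M : κ → κ → ℝ)
    (hM : ∀ y x, 0 < M y x) (v w : κ → ℝ) (hv : ∀ x, 0 < v x) (hw : ∀ x, 0 < w x)
    (lv lw : ℝ)
    (hev : ∀ y, ∑ x, M y x * v x = lv * v y)
    (hew : ∀ y, ∑ x, M y x * w x = lw * w y) :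
    ∃ t : ℝ, 0 < t ∧ ∀ x, v x = t * w x := by
  obtain ⟨x0, -, hx0⟩ := Finset.exists_min_image Finset.univ (fun x => v x / w x)
    ⟨Classical.arbitrary κ, Finset.mem_univ _⟩
  obtain ⟨x1, -, hx1⟩ := Finset.exists_max_image Finset.univ (fun x => v x / w x)
    ⟨Classical.arbitrary κ, Finset.mem_univ _⟩
  set t := v x0 / w x0 with ht_def
  have ht : 0 < t := div_pos (hv x0) (hw x0)
  have htw : t * w x0 = v x0 := div_mul_cancel₀ _ (hw x0).ne'
  have hge : ∀ x, t * w x ≤ v x := by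
    intro x
    exact (le_div_iff₀ (hw x)).mp (hx0 x (Finset.mem_univ x))
  set s := v x1 / w x1 with hs_def
  have hsw : s * w x1 = v x1 := div_mul_cancel₀ _ (hw x1).ne'
  have hle : ∀ x, v x ≤ s * w x := by
    intro x
    exact (div_le_iff₀ (hw x)).mp (hx1 x (Finset.mem_univ x))
  have hlwlv : lw ≤ lv := by
    have h1 : lw * v x0 ≤ lv * v x0 := by
      calc lw * v x0 = t * (lw * w x0) := by rw [← htw]; ring
        _ = t * ∑ x, M x0 x * w x := by rw [hew x0]
        _ = ∑ x, M x0 x * (t * w x) := by rw [Finset.mul_sum]; exact Finset.sum_congr rfl fun x _ => by ring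
        _ ≤ ∑ x, M x0 x * v x := Finset.sum_le_sum fun x _ =>
            mul_le_mul_of_nonneg_left (hge x) (hM x0 x).le
        _ = lv * v x0 := hev x0
    exact le_of_mul_le_mul_right (by simpa [mul_comm] using h1) (hv x0)
  have hlvlw : lv ≤ lw := by
    have h1 : lv * v x1 ≤ lw * v x1 := by
      calc lv * v x1 = ∑ x, M x1 x * v x := (hev x1).symm
        _ ≤ ∑ x, M x1 x * (s * w x) := Finset.sum_le_sum fun x _ =>
            mul_le_mul_of_nonneg_left (hle x) (hM x1 x).le
        _ = s * ∑ x, M x1 x * w x := by rw [Finset.mul_sum]; exact Finset.sum_congr rfl fun x _ => by ring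
        _ = s * (lw * w x1) := by rw [hew x1]
        _ = lw * v x1 := by rw [← hsw]; ring
    exact le_of_mul_le_mul_right (by simpa [mul_comm] using h1) (hv x1)
  have hl : lv = lw := le_antisymm hlvlw hlwlv
  refine ⟨t, ht, fun x => ?_⟩
  by_contra hne
  have hlt : t * w x < v x := lt_of_le_of_ne (hge x) (by intro h; exact hne h.symm)
  have hstrict : ∑ z, M x0 z * (t * w z) < ∑ z, M x0 z * v z := by
    refine Finset.sum_lt_sum (fun z _ => mul_le_mul_of_nonneg_left (hge z) (hM x0 z).le)
      ⟨x, Finset.mem_univ x, (mul_lt_mul_iff_right₀ (hM x0 x)).mpr hlt⟩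
  have heq : ∑ z, M x0 z * (t * w z) = ∑ z, M x0 z * v z := by
    calc ∑ z, M x0 z * (t * w z) = t * ∑ z, M x0 z * w z := by
          rw [Finset.mul_sum]; exact Finset.sum_congr rfl fun z _ => by ring
      _ = t * (lw * w x0) := by rw [hew x0]
      _ = lv * (t * w x0) := by rw [hl]; ring
      _ = lv * v x0 := by rw [htw]
      _ = ∑ z, M x0 z * v z := (hev x0).symm
  exact absurd heq (ne_of_lt hstrict)

end FPHelpers
open NSetAlgebra in
/-- FPdims of adjoints: if `f` is dominant with `f(a)f(b) = f(aDb)` and `g` satisfies the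
adjointness relation, then `φ_A(g(b)) = φ_A(D)·(d_B/d_A)·(FPdim A / FPdim B)·φ_B(b)`. -/
theorem stmt2 {ι κ : Type*} [Fintype ι] [Nonempty ι] [Fintype κ] [Nonempty κ]
    (A : NSetAlgebra ι) (B : NSetAlgebra κ) (hA : A.Transitive) (hB : B.Transitive)
    (φA : (ι →₀ ℕ) → ℝ) (φB : (κ →₀ ℕ) → ℝ)
    (hφA : A.IsFPCharacter φA) (hφB : B.IsFPCharacter φB)
    (εA : ι → ℕ) (εB : κ → ℕ) (hεA : ∀ i, 1 ≤ εA i) (hεB : ∀ x, 1 ≤ εB x)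
    (hRA : A.IsRegular φA (fun i => φA (Finsupp.single i 1) / (εA i : ℝ)))
    (hRB : B.IsRegular φB (fun x => φB (Finsupp.single x 1) / (εB x : ℝ)))
    (dA dB : ℕ) (hdA : 0 < dA) (hdB : 0 < dB)
    (f : (ι →₀ ℕ) → (κ →₀ ℕ))
    (haddf : ∀ a b, f (a + b) = f a + f b)
    (hdom : ∀ x : κ, ∃ a, Finsupp.single x 1 ≤ f a)
    (D : ι →₀ ℕ)
    (hD : ∀ a b, B.mul (f a) (f b) = f (A.mul (A.mul a D) b))
    (g : (κ →₀ ℕ) → (ι →₀ ℕ))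
    (haddg : ∀ a b, g (a + b) = g a + g b)
    (hadj : ∀ (i : ι) (x : κ),
      dA * εA i * g (Finsupp.single x 1) i = dB * εB x * f (Finsupp.single i 1) x) :
    ∀ b : κ →₀ ℕ, φA (g b) =
      φA D * ((dB : ℝ) / (dA : ℝ)) *
        ((∑ i : ι, φA (Finsupp.single i 1) ^ 2 / (εA i : ℝ)) /
          (∑ x : κ, φB (Finsupp.single x 1) ^ 2 / (εB x : ℝ))) * φB b := by
  classical
  -- abbreviations
  set RA : ι → ℝ := fun i => φA (Finsupp.single i 1) / (εA i : ℝ) with hRAdef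
  set RB : κ → ℝ := fun x => φB (Finsupp.single x 1) / (εB x : ℝ) with hRBdef
  obtain ⟨hRApos, hRAeig⟩ := hRA
  obtain ⟨hRBpos, hRBeig⟩ := hRB
  set S : κ → ℝ := fun x => ∑ i : ι, RA i * ((f (Finsupp.single i 1)) x : ℝ) with hSdef
  -- coordinate expansion of f
  have hfexp : ∀ (u : ι →₀ ℕ) (x : κ),
      ((f u) x : ℝ) = ∑ i : ι, (u i : ℝ) * ((f (Finsupp.single i 1)) x : ℝ) := by
    intro u x
    exact addext (fun u => ((f u) x : ℝ))
      (fun p q => by rw [haddf]; push_cast [Finsupp.add_apply]; ring) u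
  -- positivity of S
  have hSpos : ∀ x, 0 < S x := by
    intro x
    obtain ⟨a, ha⟩ := hdom x
    have h1 : (1 : ℝ) ≤ ((f a) x : ℝ) := by
      have := Finsupp.le_def.mp ha x
      simp only [Finsupp.single_eq_same] at this
      exact_mod_cast this
    have hex : ∃ i : ι, 0 < ((f (Finsupp.single i 1)) x : ℝ) := by
      by_contra hc
      push_neg at hc
      have hz : ∀ i : ι, ((f (Finsupp.single i 1)) x : ℝ) = 0 :=
        fun i => le_antisymm (hc i) (Nat.cast_nonneg _)
      have h0 : ((f a) x : ℝ) = 0 := by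
        rw [hfexp a x]
        simp [hz]
      rw [h0] at h1; linarith
    obtain ⟨i0, hi0⟩ := hex
    refine Finset.sum_pos' (fun i _ => mul_nonneg (hRApos i).le (Nat.cast_nonneg _)) ?_
    exact ⟨i0, Finset.mem_univ i0, mul_pos (hRApos i0) hi0⟩
  -- (A.mul c e_i) at j
  have hmul_single : ∀ (c : ι →₀ ℕ) (i j : ι),
      ((A.mul c (Finsupp.single i 1)) j : ℝ) = ∑ p : ι, (c p : ℝ) * (A.N p i j : ℝ) := by
    intro c i j
    rw [mul_coord]
    refine Finset.sum_congr rfl fun p _ => ?_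
    rw [Finset.sum_eq_single i]
    · simp
    · intro q _ hq
      have : ((Finsupp.single i 1 : ι →₀ ℕ) q : ℝ) = 0 := by
        simp [Finsupp.single_apply, Ne.symm hq]
      simp [this]
    · intro hk; exact absurd (Finset.mem_univ i) hk
  -- eigen-equation for S
  have E1 : ∀ (a : ι →₀ ℕ) (y : κ),
      ∑ x : κ, (∑ z : κ, ((f a) z : ℝ) * (B.N z x y : ℝ)) * S x = (φA a * φA D) * S y := by
    intro a y
    have step1 : ∑ x : κ, (∑ z : κ, ((f a) z : ℝ) * (B.N z x y : ℝ)) * S x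
        = ∑ i : ι, RA i * ((B.mul (f a) (f (Finsupp.single i 1))) y : ℝ) := by
      have hx : ∀ x : κ, (∑ z : κ, ((f a) z : ℝ) * (B.N z x y : ℝ)) * S x
          = ∑ i : ι, RA i * ∑ z : κ,
              ((f a) z : ℝ) * ((f (Finsupp.single i 1)) x : ℝ) * (B.N z x y : ℝ) := by
        intro x
        simp only [hSdef]
        rw [Finset.sum_mul_sum]
        rw [Finset.sum_comm]
        refine Finset.sum_congr rfl fun i _ => ?_
        rw [Finset.mul_sum]
        exact Finset.sum_congr rfl fun z _ => by ring
      calc ∑ x : κ, (∑ z : κ, ((f a) z : ℝ) * (B.N z x y : ℝ)) * S x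
          = ∑ x : κ, ∑ i : ι, RA i * ∑ z : κ,
              ((f a) z : ℝ) * ((f (Finsupp.single i 1)) x : ℝ) * (B.N z x y : ℝ) :=
            Finset.sum_congr rfl fun x _ => hx x
        _ = ∑ i : ι, ∑ x : κ, RA i * ∑ z : κ,
              ((f a) z : ℝ) * ((f (Finsupp.single i 1)) x : ℝ) * (B.N z x y : ℝ) :=
            Finset.sum_comm
        _ = ∑ i : ι, RA i * ((B.mul (f a) (f (Finsupp.single i 1))) y : ℝ) := by
            refine Finset.sum_congr rfl fun i _ => ?_
            rw [← Finset.mul_sum, mul_coord B (f a) (f (Finsupp.single i 1)) y,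
              Finset.sum_comm]
    rw [step1]
    have hc : ∀ i : ι, B.mul (f a) (f (Finsupp.single i 1))
        = f (A.mul (A.mul a D) (Finsupp.single i 1)) := fun i => hD a (Finsupp.single i 1)
    set c : ι →₀ ℕ := A.mul a D with hcdef
    have step2 : ∑ i : ι, RA i * ((f (A.mul c (Finsupp.single i 1))) y : ℝ) = φA c * S y := by
      have inner : ∀ j : ι, ∑ i : ι, RA i * ((A.mul c (Finsupp.single i 1)) j : ℝ)
          = φA c * RA j := by
        intro j
        calc ∑ i : ι, RA i * ((A.mul c (Finsupp.single i 1)) j : ℝ)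
            = ∑ i : ι, RA i * ∑ p : ι, (c p : ℝ) * (A.N p i j : ℝ) :=
              Finset.sum_congr rfl fun i _ => by rw [hmul_single]
          _ = ∑ i : ι, ∑ p : ι, (c p : ℝ) * RA i * (A.N p i j : ℝ) := by
              refine Finset.sum_congr rfl fun i _ => ?_
              rw [Finset.mul_sum]
              exact Finset.sum_congr rfl fun p _ => by ring
          _ = ∑ p : ι, ∑ i : ι, (c p : ℝ) * RA i * (A.N p i j : ℝ) := Finset.sum_comm
          _ = φA c * RA j := reg_ext A φA hφA.map_add RA hRAeig c j
      calc ∑ i : ι, RA i * ((f (A.mul c (Finsupp.single i 1))) y : ℝ)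
          = ∑ i : ι, RA i * ∑ j : ι, ((A.mul c (Finsupp.single i 1)) j : ℝ)
              * ((f (Finsupp.single j 1)) y : ℝ) :=
            Finset.sum_congr rfl fun i _ => by rw [hfexp]
        _ = ∑ j : ι, (∑ i : ι, RA i * ((A.mul c (Finsupp.single i 1)) j : ℝ))
              * ((f (Finsupp.single j 1)) y : ℝ) := by
            calc ∑ i : ι, RA i * ∑ j : ι, ((A.mul c (Finsupp.single i 1)) j : ℝ)
                  * ((f (Finsupp.single j 1)) y : ℝ)
                = ∑ i : ι, ∑ j : ι, (RA i * ((A.mul c (Finsupp.single i 1)) j : ℝ))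
                    * ((f (Finsupp.single j 1)) y : ℝ) := by
                  refine Finset.sum_congr rfl fun i _ => ?_
                  rw [Finset.mul_sum]
                  exact Finset.sum_congr rfl fun j _ => by ring
              _ = ∑ j : ι, ∑ i : ι, (RA i * ((A.mul c (Finsupp.single i 1)) j : ℝ))
                    * ((f (Finsupp.single j 1)) y : ℝ) := Finset.sum_comm
              _ = ∑ j : ι, (∑ i : ι, RA i * ((A.mul c (Finsupp.single i 1)) j : ℝ))
                    * ((f (Finsupp.single j 1)) y : ℝ) :=
                  Finset.sum_congr rfl fun j _ => (Finset.sum_mul _ _ _).symm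
        _ = ∑ j : ι, φA c * (RA j * ((f (Finsupp.single j 1)) y : ℝ)) := by
            refine Finset.sum_congr rfl fun j _ => ?_
            rw [inner j]; ring
        _ = φA c * S y := by rw [← Finset.mul_sum]
    calc ∑ i : ι, RA i * ((B.mul (f a) (f (Finsupp.single i 1))) y : ℝ)
        = ∑ i : ι, RA i * ((f (A.mul c (Finsupp.single i 1))) y : ℝ) :=
          Finset.sum_congr rfl fun i _ => by rw [hc i]
      _ = φA c * S y := step2
      _ = (φA a * φA D) * S y := by rw [hcdef, hφA.map_mul]
  -- eigen-equation for RB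
  have E2 : ∀ (u : κ →₀ ℕ) (y : κ),
      ∑ x : κ, (∑ z : κ, (u z : ℝ) * (B.N z x y : ℝ)) * RB x = φB u * RB y := by
    intro u y
    calc ∑ x : κ, (∑ z : κ, (u z : ℝ) * (B.N z x y : ℝ)) * RB x
        = ∑ x : κ, ∑ z : κ, (u z : ℝ) * RB x * (B.N z x y : ℝ) := by
          refine Finset.sum_congr rfl fun x _ => ?_
          rw [Finset.sum_mul]
          exact Finset.sum_congr rfl fun z _ => by ring
      _ = ∑ z : κ, ∑ x : κ, (u z : ℝ) * RB x * (B.N z x y : ℝ) := Finset.sum_comm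
      _ = φB u * RB y := reg_ext B φB hφB.map_add RB hRBeig u y
  -- construct astar with f astar everywhere ≥ 1
  set astar : ι →₀ ℕ := ∑ x : κ, Classical.choose (hdom x) with hastardef
  have hfstar : ∀ y : κ, (1 : ℝ) ≤ ((f astar) y : ℝ) := by
    intro y
    have hf0 : f 0 = 0 := by
      have h00 := haddf 0 0
      simp only [add_zero] at h00
      exact (left_eq_add.mp h00).symm ▸ rfl
    have hsumgen : ∀ (s : Finset κ), f (∑ x ∈ s, Classical.choose (hdom x))
        = ∑ x ∈ s, f (Classical.choose (hdom x)) := by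
      intro s
      induction s using Finset.induction_on with
      | empty => simpa using hf0
      | insert _ _ h ih =>
          rw [Finset.sum_insert h, Finset.sum_insert h, haddf, ih]
    have hsum : f astar = ∑ x : κ, f (Classical.choose (hdom x)) := hsumgen Finset.univ
    have h1 : Finsupp.single y 1 ≤ f (Classical.choose (hdom y)) := Classical.choose_spec (hdom y)
    have h2 : (1 : ℕ) ≤ (f (Classical.choose (hdom y))) y := by
      have := Finsupp.le_def.mp h1 y
      simpa using this
    have h3 : (f (Classical.choose (hdom y))) y ≤ (f astar) y := by
      rw [hsum, Finsupp.finset_sum_apply]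
      exact Finset.single_le_sum (f := fun x => (f (Classical.choose (hdom x))) y)
        (fun x _ => Nat.zero_le _) (Finset.mem_univ y)
    exact_mod_cast h2.trans h3
  -- the positive matrix
  set M : κ → κ → ℝ := fun y x => ∑ z : κ, ((f astar) z : ℝ) * (B.N z x y : ℝ) with hMdef
  have hMpos : ∀ y x, 0 < M y x := by
    intro y x
    obtain ⟨u, hu⟩ := (hB x y).1
    have hN : (1 : ℝ) ≤ (B.N u x y : ℝ) := by
      have := Finsupp.le_def.mp hu y
      simp only [Finsupp.single_eq_same] at this
      exact_mod_cast this
    refine Finset.sum_pos' (fun z _ => mul_nonneg (Nat.cast_nonneg _) (Nat.cast_nonneg _)) ?_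
    exact ⟨u, Finset.mem_univ u, mul_pos (lt_of_lt_of_le one_pos (hfstar u))
      (lt_of_lt_of_le one_pos hN)⟩
  -- Perron–Frobenius uniqueness
  obtain ⟨t, ht, htS⟩ := perronUniq M hMpos S RB hSpos hRBpos
    (φA astar * φA D) (φB (f astar)) (fun y => E1 astar y) (fun y => E2 (f astar) y)
  -- eigenvalue identity : φB (f a) = φA a * φA D
  have heig : ∀ a : ι →₀ ℕ, φB (f a) = φA a * φA D := by
    intro a
    set y0 : κ := Classical.arbitrary κ with hy0
    have h3 : ∑ x : κ, (∑ z : κ, ((f a) z : ℝ) * (B.N z x y0 : ℝ)) * S x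
        = φB (f a) * S y0 := by
      calc ∑ x : κ, (∑ z : κ, ((f a) z : ℝ) * (B.N z x y0 : ℝ)) * S x
          = ∑ x : κ, (∑ z : κ, ((f a) z : ℝ) * (B.N z x y0 : ℝ)) * (t * RB x) :=
            Finset.sum_congr rfl fun x _ => by rw [htS x]
        _ = t * ∑ x : κ, (∑ z : κ, ((f a) z : ℝ) * (B.N z x y0 : ℝ)) * RB x := by
            rw [Finset.mul_sum]
            exact Finset.sum_congr rfl fun x _ => by ring
        _ = t * (φB (f a) * RB y0) := by rw [E2 (f a) y0]
        _ = φB (f a) * (t * RB y0) := by ring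
        _ = φB (f a) * S y0 := by rw [← htS y0]
    have h4 : (φA a * φA D) * S y0 = φB (f a) * S y0 := (E1 a y0).symm.trans h3
    have := mul_right_cancel₀ (hSpos y0).ne' h4
    exact this.symm
  -- value of t
  set FA : ℝ := ∑ i : ι, φA (Finsupp.single i 1) ^ 2 / (εA i : ℝ) with hFAdef
  set FB : ℝ := ∑ x : κ, φB (Finsupp.single x 1) ^ 2 / (εB x : ℝ) with hFBdef
  have hεBR : ∀ x, (0 : ℝ) < (εB x : ℝ) := fun x => by exact_mod_cast hεB x
  have hεAR : ∀ i, (0 : ℝ) < (εA i : ℝ) := fun i => by exact_mod_cast hεA i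
  have hFBpos : 0 < FB := by
    rw [hFBdef]
    refine Finset.sum_pos (fun x _ => div_pos (pow_pos (hφB.pos x) 2) (hεBR x)) ⟨Classical.arbitrary κ, Finset.mem_univ _⟩
  have htval : t * FB = φA D * FA := by
    have lhs : ∑ x : κ, S x * φB (Finsupp.single x 1) = t * FB := by
      calc ∑ x : κ, S x * φB (Finsupp.single x 1)
          = ∑ x : κ, t * (RB x * φB (Finsupp.single x 1)) :=
            Finset.sum_congr rfl fun x _ => by rw [htS x]; ring
        _ = t * ∑ x : κ, RB x * φB (Finsupp.single x 1) := by rw [Finset.mul_sum]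
        _ = t * FB := by
            rw [hFBdef, hRBdef]
            congr 1
            exact Finset.sum_congr rfl fun x _ => by ring
    have rhs : ∑ x : κ, S x * φB (Finsupp.single x 1) = φA D * FA := by
      calc ∑ x : κ, S x * φB (Finsupp.single x 1)
          = ∑ x : κ, ∑ i : ι, RA i * ((f (Finsupp.single i 1)) x : ℝ)
              * φB (Finsupp.single x 1) := by
            refine Finset.sum_congr rfl fun x _ => ?_
            simp only [hSdef]
            rw [Finset.sum_mul]
        _ = ∑ i : ι, ∑ x : κ, RA i * ((f (Finsupp.single i 1)) x : ℝ)
              * φB (Finsupp.single x 1) := Finset.sum_comm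
        _ = ∑ i : ι, RA i * φB (f (Finsupp.single i 1)) := by
            refine Finset.sum_congr rfl fun i _ => ?_
            rw [addext φB hφB.map_add (f (Finsupp.single i 1)), Finset.mul_sum]
            exact Finset.sum_congr rfl fun x _ => by ring
        _ = ∑ i : ι, RA i * (φA (Finsupp.single i 1) * φA D) :=
            Finset.sum_congr rfl fun i _ => by rw [heig]
        _ = φA D * FA := by
            rw [hFAdef, Finset.mul_sum]
            refine Finset.sum_congr rfl fun i _ => ?_
            rw [hRAdef]
            ring
    rw [← lhs, rhs]
  have htv : t = φA D * FA / FB := by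
    field_simp
    linarith [htval]
  -- per-simple computation for g
  have hperx : ∀ x : κ, φA (g (Finsupp.single x 1))
      = φA D * ((dB : ℝ) / (dA : ℝ)) * (FA / FB) * φB (Finsupp.single x 1) := by
    intro x
    have hdAR : (0 : ℝ) < (dA : ℝ) := by exact_mod_cast hdA
    have hadjR : ∀ i : ι, ((g (Finsupp.single x 1)) i : ℝ)
        = (dB : ℝ) * (εB x : ℝ) * ((f (Finsupp.single i 1)) x : ℝ) / ((dA : ℝ) * (εA i : ℝ)) := by
      intro i
      have h := hadj i x
      have hcast : (dA : ℝ) * (εA i : ℝ) * ((g (Finsupp.single x 1)) i : ℝ)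
          = (dB : ℝ) * (εB x : ℝ) * ((f (Finsupp.single i 1)) x : ℝ) := by exact_mod_cast h
      rw [eq_div_iff (mul_pos hdAR (hεAR i)).ne']
      linarith [hcast]
    calc φA (g (Finsupp.single x 1))
        = ∑ i : ι, ((g (Finsupp.single x 1)) i : ℝ) * φA (Finsupp.single i 1) :=
          addext φA hφA.map_add (g (Finsupp.single x 1))
      _ = ∑ i : ι, ((dB : ℝ) * (εB x : ℝ) / (dA : ℝ)) * (RA i * ((f (Finsupp.single i 1)) x : ℝ)) := by
          refine Finset.sum_congr rfl fun i _ => ?_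
          rw [hadjR i, hRAdef]
          field_simp
      _ = ((dB : ℝ) * (εB x : ℝ) / (dA : ℝ)) * S x := by
          rw [hSdef, ← Finset.mul_sum]
      _ = ((dB : ℝ) * (εB x : ℝ) / (dA : ℝ)) * (t * RB x) := by rw [htS x]
      _ = φA D * ((dB : ℝ) / (dA : ℝ)) * (FA / FB) * φB (Finsupp.single x 1) := by
          rw [htv, hRBdef]
          have h1 : ((εB x : ℕ) : ℝ) ≠ 0 := (hεBR x).ne'
          have h2 : ((dA : ℕ) : ℝ) ≠ 0 := by positivity
          have h3 : FB ≠ 0 := hFBpos.ne'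
          field_simp
  -- conclusion
  intro b
  calc φA (g b) = ∑ x : κ, (b x : ℝ) * φA (g (Finsupp.single x 1)) :=
        addext (fun u => φA (g u)) (fun u v => by rw [haddg, hφA.map_add]) b
    _ = ∑ x : κ, (b x : ℝ) * (φA D * ((dB : ℝ) / (dA : ℝ)) * (FA / FB) * φB (Finsupp.single x 1)) :=
        Finset.sum_congr rfl fun x _ => by rw [hperx x]
    _ = φA D * ((dB : ℝ) / (dA : ℝ)) * (FA / FB) * ∑ x : κ, (b x : ℝ) * φB (Finsupp.single x 1) := by
        rw [Finset.mul_sum]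
        exact Finset.sum_congr rfl fun x _ => by ring
    _ = φA D * ((dB : ℝ) / (dA : ℝ)) * (FA / FB) * φB b := by
        rw [← addext φB hφB.map_add b]
end

section
/- Let C be a monoidal category. For every object (Z, β) of the Drinfeld center Z(C), the underlying object Z is Galois trivial: for every endomorphism e : 𝟙 ⟶ 𝟙 of the monoidal unit, λ_Z(e) = ρ_Z(e). In particular, every object in the image of the forgetful functor Z(C) → C is Galois trivial. -/
open CategoryTheory MonoidalCategory

variable {C : Type*} [Category C] [MonoidalCategory C]

/-- The left embedding `λ_X : End(𝟙) → End(X)`,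
`e ↦ ℓ_X ∘ (e ⊗ id_X) ∘ ℓ_X⁻¹`. -/
def leftEmbed (X : C) (e : 𝟙_ C ⟶ 𝟙_ C) : X ⟶ X :=
  (λ_ X).inv ≫ (e ▷ X) ≫ (λ_ X).hom

/-- The right embedding `ρ_X : End(𝟙) → End(X)`,
`e ↦ r_X ∘ (id_X ⊗ e) ∘ r_X⁻¹`. -/
def rightEmbed (X : C) (e : 𝟙_ C ⟶ 𝟙_ C) : X ⟶ X :=
  (ρ_ X).inv ≫ (X ◁ e) ≫ (ρ_ X).hom

/-- `X` is Galois trivial if the left and right embeddings agree on it. -/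
def GaloisTrivial (X : C) : Prop :=
  ∀ e : 𝟙_ C ⟶ 𝟙_ C, leftEmbed X e = rightEmbed X e

/-- A half-braiding at the unit object is the composite of unitors. -/
lemma beta_unit {X : C} (b : HalfBraiding X) :
    (b.β (𝟙_ C)).hom = (ρ_ X).hom ≫ (λ_ X).inv := by
  have h := b.naturality (λ_ (𝟙_ C)).hom
  simp only [b.monoidal, MonoidalCategory.whiskerRight_id, id_whiskerLeft, tensor_whiskerLeft,
    whiskerRight_tensor, whiskerLeft_rightUnitor, unitors_equal, Category.assoc,
    Iso.inv_hom_id, Iso.inv_hom_id_assoc, Iso.hom_inv_id_assoc, Category.comp_id] at h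
  have h2 : (b.β (𝟙_ C)).hom ≫ 𝟙 _ = (b.β (𝟙_ C)).hom ≫
      ((ρ_ (𝟙_ C ⊗ X)).inv ≫ (α_ (𝟙_ C) X (𝟙_ C)).hom ≫ (λ_ (X ⊗ 𝟙_ C)).hom ≫
        (b.β (𝟙_ C)).hom ≫ (λ_ (𝟙_ C ⊗ X)).inv ≫ (α_ (𝟙_ C) (𝟙_ C) X).inv ≫
        (ρ_ (𝟙_ C)).hom ▷ X) := by
    simpa using h
  have h3 := (cancel_epi (b.β (𝟙_ C)).hom).1 h2
  have h4 := congrArg (fun m => (λ_ (X ⊗ 𝟙_ C)).inv ≫ (α_ (𝟙_ C) X (𝟙_ C)).inv ≫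
      (ρ_ (𝟙_ C ⊗ X)).hom ≫ m ≫ (ρ_ (𝟙_ C)).inv ▷ X ≫ (α_ (𝟙_ C) (𝟙_ C) X).hom ≫
      (λ_ (𝟙_ C ⊗ X)).hom) h3
  simp only [Category.id_comp, Category.assoc, Iso.hom_inv_id_assoc, Iso.inv_hom_id_assoc,
    Iso.inv_hom_id, Category.comp_id, hom_inv_whiskerRight_assoc, inv_hom_whiskerRight_assoc,
    ← comp_whiskerRight_assoc, Iso.hom_inv_id, id_whiskerRight] at h4
  rw [← h4]
  monoidal

/-- Every object in the image of the forgetful functor `Z(C) → C` is Galois trivial: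
for every object `(Z, β)` of the Drinfeld center and every `e : 𝟙 ⟶ 𝟙`,
`λ_Z(e) = ρ_Z(e)`. -/
theorem stmt3 (Z : CategoryTheory.Center C) : GaloisTrivial Z.1 := by
  intro e
  have h := Z.2.naturality e
  rw [beta_unit Z.2] at h
  unfold leftEmbed rightEmbed
  rw [← cancel_epi (ρ_ Z.1).hom, ← cancel_mono (ρ_ Z.1).inv]
  simp only [Category.assoc, Iso.hom_inv_id, Category.comp_id, Iso.hom_inv_id_assoc]
  rw [Category.assoc] at h
  rw [← reassoc_of% h]
  simp
end

section
/- Let A = ι →₀ ℕ be an ℕSet algebra. If i, j ∈ ι satisfy e_i ≤ 1 and e_j ≤ 1, then e_i * e_j = e_i when i = j and e_i * e_j = 0 when i ≠ j. Furthermore, 1 = Σ_{i ∈ O_0} e_i, where O_0 = { i ∈ ι | e_i ≤ 1 }; equivalently, every coefficient of the unit 1 is either 0 or 1. -/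
open Finsupp

namespace NSetAlgebraAux

variable {ι : Type*} (A : NSetAlgebra ι)

lemma mul_sum {α : Type*} (a : ι →₀ ℕ) (s : Finset α) (g : α → ι →₀ ℕ) :
    A.mul a (∑ x ∈ s, g x) = ∑ x ∈ s, A.mul a (g x) := by
  classical
  induction s using Finset.induction with
  | empty => simpa using A.mul_zero a
  | insert _ _ h ih => rw [Finset.sum_insert h, A.left_distrib, ih, Finset.sum_insert h]

lemma sum_mul {α : Type*} (a : ι →₀ ℕ) (s : Finset α) (g : α → ι →₀ ℕ) :
    A.mul (∑ x ∈ s, g x) a = ∑ x ∈ s, A.mul (g x) a := by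
  classical
  induction s using Finset.induction with
  | empty => simpa using A.zero_mul a
  | insert _ _ h ih => rw [Finset.sum_insert h, A.right_distrib, ih, Finset.sum_insert h]

lemma mul_nsmul (a b : ι →₀ ℕ) (n : ℕ) : A.mul a (n • b) = n • A.mul a b := by
  induction n with
  | zero => simpa using A.mul_zero a
  | succ n ih => rw [succ_nsmul, A.left_distrib, ih, succ_nsmul]

lemma nsmul_mul (a b : ι →₀ ℕ) (n : ℕ) : A.mul (n • b) a = n • A.mul b a := by
  induction n with
  | zero => simpa using A.zero_mul a
  | succ n ih => rw [succ_nsmul, A.right_distrib, ih, succ_nsmul]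

def mass (a : ι →₀ ℕ) : ℕ := a.sum fun _ n => n

lemma mass_add (a b : ι →₀ ℕ) : mass (a + b) = mass a + mass b :=
  Finsupp.sum_add_index' (fun _ => rfl) (fun _ _ _ => rfl)

lemma mass_zero : mass (0 : ι →₀ ℕ) = 0 := Finsupp.sum_zero_index

lemma mass_nsmul (n : ℕ) (a : ι →₀ ℕ) : mass (n • a) = n * mass a := by
  induction n with
  | zero => simp [mass_zero]
  | succ n ih => rw [succ_nsmul, mass_add, ih, Nat.succ_mul]

lemma apply_le_mass (a : ι →₀ ℕ) (k : ι) : a k ≤ mass a := by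
  by_cases h : k ∈ a.support
  · exact Finset.single_le_sum (fun _ _ => Nat.zero_le _) h
  · simp [Finsupp.notMem_support_iff.mp h]

lemma eq_zero_of_mass_eq_zero {a : ι →₀ ℕ} (h : mass a = 0) : a = 0 := by
  ext k; exact Nat.le_zero.mp (h ▸ apply_le_mass a k)

lemma mass_single (i : ι) : mass (Finsupp.single i (1:ℕ)) = 1 := by
  simp [mass, Finsupp.sum_single_index]

lemma mass_sum {α : Type*} (s : Finset α) (g : α → ι →₀ ℕ) :
    mass (∑ x ∈ s, g x) = ∑ x ∈ s, mass (g x) := by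
  classical
  induction s using Finset.induction with
  | empty => simp [mass_zero]
  | insert _ _ h ih => rw [Finset.sum_insert h, mass_add, ih, Finset.sum_insert h]

lemma sum_eq_one {α : Type*} [DecidableEq α] {s : Finset α} {f : α → ℕ}
    (h : ∑ x ∈ s, f x = 1) :
    ∃ a ∈ s, f a = 1 ∧ ∀ b ∈ s, b ≠ a → f b = 0 := by
  obtain ⟨a, ha, hfa⟩ := Finset.exists_ne_zero_of_sum_ne_zero (h ▸ one_ne_zero)
  have h1 : f a ≤ 1 := h ▸ Finset.single_le_sum (fun _ _ => Nat.zero_le _) ha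
  have hfa1 : f a = 1 := le_antisymm h1 (Nat.one_le_iff_ne_zero.mpr hfa)
  refine ⟨a, ha, hfa1, fun b hb hne => ?_⟩
  have he := Finset.add_sum_erase s f ha
  have hz : ∑ x ∈ s.erase a, f x = 0 := by omega
  exact Finset.sum_eq_zero_iff.mp hz b (Finset.mem_erase.mpr ⟨hne, hb⟩)

lemma one_decomp : A.one = ∑ k ∈ A.one.support, (A.one k) • Finsupp.single k (1:ℕ) := by
  conv_lhs => rw [← Finsupp.sum_single A.one]
  refine Finset.sum_congr rfl fun k _ => ?_
  rw [Finsupp.smul_single, smul_eq_mul, mul_one]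

lemma right_unit (i : ι) :
    ∃ j ∈ A.one.support, A.one j = 1 ∧
      A.mul (Finsupp.single i 1) (Finsupp.single j 1) = Finsupp.single i 1 ∧
      ∀ k ∈ A.one.support, k ≠ j →
        A.mul (Finsupp.single i 1) (Finsupp.single k 1) = 0 := by
  classical
  set e : ι → (ι →₀ ℕ) := fun k => Finsupp.single k 1 with he
  have hexp : e i = ∑ k ∈ A.one.support, (A.one k) • A.mul (e i) (e k) := by
    conv_lhs => rw [← A.mul_one (e i), one_decomp A]
    rw [mul_sum]
    exact Finset.sum_congr rfl fun k _ => mul_nsmul A _ _ _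
  have hmass : (∑ k ∈ A.one.support, (A.one k) * mass (A.mul (e i) (e k))) = 1 := by
    have h := congrArg mass hexp
    rw [mass_single, mass_sum] at h
    simp only [mass_nsmul] at h
    exact h.symm
  obtain ⟨j, hj, hj1, hz⟩ := sum_eq_one hmass
  have hoj : A.one j = 1 := Nat.eq_one_of_mul_eq_one_right hj1
  have hmj : mass (A.mul (e i) (e j)) = 1 := Nat.eq_one_of_mul_eq_one_left hj1
  have hzero : ∀ k ∈ A.one.support, k ≠ j → A.mul (e i) (e k) = 0 := by
    intro k hk hne
    refine eq_zero_of_mass_eq_zero ?_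
    have h0 := hz k hk hne
    have hk0 : A.one k ≠ 0 := Finsupp.mem_support_iff.mp hk
    exact (Nat.mul_eq_zero.mp h0).resolve_left hk0
  have hcoll : A.mul (e i) (e j) = e i := by
    conv_rhs => rw [hexp]
    rw [Finset.sum_eq_single j (fun k hk hne => by rw [hzero k hk hne, smul_zero])
      (fun h => absurd hj h), hoj, one_smul]
  exact ⟨j, hj, hoj, hcoll, hzero⟩

lemma left_unit (j : ι) :
    ∃ i ∈ A.one.support, A.one i = 1 ∧
      A.mul (Finsupp.single i 1) (Finsupp.single j 1) = Finsupp.single j 1 ∧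
      ∀ k ∈ A.one.support, k ≠ i →
        A.mul (Finsupp.single k 1) (Finsupp.single j 1) = 0 := by
  classical
  set e : ι → (ι →₀ ℕ) := fun k => Finsupp.single k 1 with he
  have hexp : e j = ∑ k ∈ A.one.support, (A.one k) • A.mul (e k) (e j) := by
    conv_lhs => rw [← A.one_mul (e j), one_decomp A]
    rw [sum_mul]
    exact Finset.sum_congr rfl fun k _ => nsmul_mul A _ _ _
  have hmass : (∑ k ∈ A.one.support, (A.one k) * mass (A.mul (e k) (e j))) = 1 := by
    have h := congrArg mass hexp
    rw [mass_single, mass_sum] at h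
    simp only [mass_nsmul] at h
    exact h.symm
  obtain ⟨i, hi, hi1, hz⟩ := sum_eq_one hmass
  have hoi : A.one i = 1 := Nat.eq_one_of_mul_eq_one_right hi1
  have hzero : ∀ k ∈ A.one.support, k ≠ i → A.mul (e k) (e j) = 0 := by
    intro k hk hne
    refine eq_zero_of_mass_eq_zero ?_
    have h0 := hz k hk hne
    have hk0 : A.one k ≠ 0 := Finsupp.mem_support_iff.mp hk
    exact (Nat.mul_eq_zero.mp h0).resolve_left hk0
  have hcoll : A.mul (e i) (e j) = e j := by
    conv_rhs => rw [hexp]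
    rw [Finset.sum_eq_single i (fun k hk hne => by rw [hzero k hk hne, smul_zero])
      (fun h => absurd hi h), hoi, one_smul]
  exact ⟨i, hi, hoi, hcoll, hzero⟩

lemma key (i : ι) (hi : i ∈ A.one.support) :
    A.one i = 1 ∧ A.mul (Finsupp.single i 1) (Finsupp.single i 1) = Finsupp.single i 1 ∧
      ∀ k ∈ A.one.support, k ≠ i → A.mul (Finsupp.single i 1) (Finsupp.single k 1) = 0 := by
  obtain ⟨j, hj, hoj, hij, hz⟩ := right_unit A i
  obtain ⟨i0, hi0, hoi0, hi0j, hz'⟩ := left_unit A j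
  have hii0 : i = i0 := by
    by_contra hne
    have h0 := hz' i hi hne
    rw [hij] at h0
    exact one_ne_zero (Finsupp.single_eq_zero.mp h0)
  have hje : Finsupp.single i (1:ℕ) = Finsupp.single j 1 := by
    rw [← hij, hii0, hi0j]
  have hji : i = j := Finsupp.single_left_injective one_ne_zero hje
  subst hji
  exact ⟨hoj, hij, hz⟩

end NSetAlgebraAux

open NSetAlgebra in
/-- In an ℕSet algebra, the simple summands of `1` are orthogonal idempotents:
`e_i * e_j = e_i` if `i = j` and `0` otherwise, for `e_i, e_j ≤ 1`.  Moreover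
`1 = Σ_{i ∈ O₀} e_i`; equivalently, every coefficient of `1` is `0` or `1`. -/
theorem stmt6 {ι : Type*} (A : NSetAlgebra ι) :
    (∀ i j : ι, Finsupp.single i 1 ≤ A.one → Finsupp.single j 1 ≤ A.one →
      (i = j → A.mul (Finsupp.single i 1) (Finsupp.single j 1) = Finsupp.single i 1) ∧
      (i ≠ j → A.mul (Finsupp.single i 1) (Finsupp.single j 1) = 0)) ∧
    (A.one = ∑ k ∈ A.one.support, Finsupp.single k 1) ∧
    (∀ k : ι, A.one k = 0 ∨ A.one k = 1) := by
  classical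
  have mem : ∀ i : ι, Finsupp.single i (1:ℕ) ≤ A.one → i ∈ A.one.support := fun i h =>
    Finsupp.mem_support_iff.mpr (Nat.one_le_iff_ne_zero.mp (Finsupp.single_le_iff.mp h))
  refine ⟨fun i j hi hj => ⟨fun hij => ?_, fun hij => ?_⟩, ?_, ?_⟩
  · subst hij
    exact (NSetAlgebraAux.key A i (mem i hi)).2.1
  · exact (NSetAlgebraAux.key A i (mem i hi)).2.2 j (mem j hj) (Ne.symm hij)
  · conv_lhs => rw [NSetAlgebraAux.one_decomp A]
    refine Finset.sum_congr rfl fun k hk => ?_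
    rw [(NSetAlgebraAux.key A k hk).1, one_smul]
  · intro k
    by_cases hk : k ∈ A.one.support
    · exact Or.inr (NSetAlgebraAux.key A k hk).1
    · exact Or.inl (Finsupp.notMem_support_iff.mp hk)
end

section
/- Let A = ι →₀ ℕ be a transitive finite-rank ℕSet algebra with Frobenius–Perron character φ. Then there exists a regular element: a vector R : ι → ℝ with R(i) > 0 for all i ∈ ι such that a ⋆ R = φ(a) • R for every a ∈ ι →₀ ℕ; and R is unique up to scaling: every nonzero r : ι → ℝ satisfying e_i ⋆ r = φ(e_i) • r for all i ∈ ι is a scalar multiple of R. -/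
open Finsupp

set_option linter.unusedSectionVars false
set_option maxHeartbeats 1000000

namespace PFaux

section PF
variable {n : Type*} [Fintype n] [Nonempty n]

noncomputable def mvec (T : n → n → ℝ) (x : n → ℝ) : n → ℝ := fun k => ∑ b, T k b * x b

lemma mvec_pos_of_nonneg {T : n → n → ℝ} (hT : ∀ k b, 0 < T k b) {w : n → ℝ}
    (hw : ∀ b, 0 ≤ w b) (hne : ∃ b, 0 < w b) (k : n) : 0 < mvec T w k := by
  obtain ⟨b0, hb0⟩ := hne
  have : 0 < T k b0 * w b0 := mul_pos (hT k b0) hb0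
  refine Finset.sum_pos' (fun b _ => mul_nonneg (hT k b).le (hw b)) ⟨b0, Finset.mem_univ _, this⟩

/-- Perron–Frobenius uniqueness: any eigenvector at an eigenvalue with a positive
eigenvector is proportional to it. -/
lemma pf_unique {T : n → n → ℝ} (hT : ∀ k b, 0 < T k b) {lam : ℝ} {R : n → ℝ}
    (hR : ∀ k, 0 < R k) (hTR : ∀ k, mvec T R k = lam * R k)
    {v : n → ℝ} (hv : ∀ k, mvec T v k = lam * v k) : ∃ c : ℝ, v = c • R := by
  obtain ⟨k0, _, hk0⟩ := Finset.exists_min_image Finset.univ (fun k => v k / R k) ⟨Classical.arbitrary n, Finset.mem_univ _⟩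
  set c := v k0 / R k0 with hc
  refine ⟨c, ?_⟩
  set w : n → ℝ := fun k => v k - c * R k with hwdef
  have hwnn : ∀ k, 0 ≤ w k := by
    intro k
    have h := hk0 k (Finset.mem_univ k)
    have hRk := hR k
    have : c * R k ≤ v k := by
      rw [hc]
      calc v k0 / R k0 * R k ≤ v k / R k * R k := by
            apply mul_le_mul_of_nonneg_right h hRk.le
        _ = v k := div_mul_cancel₀ _ hRk.ne'
    simpa [hwdef] using sub_nonneg.mpr this
  have hwk0 : w k0 = 0 := by
    simp [hwdef, hc, div_mul_cancel₀ _ (hR k0).ne']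
  have hTw : ∀ k, mvec T w k = lam * w k := by
    intro k
    have : mvec T w k = mvec T v k - c * mvec T R k := by
      simp only [mvec, hwdef, Finset.mul_sum, ← Finset.sum_sub_distrib]
      congr 1; ext b; ring
    rw [this, hv, hTR]; ring
  by_cases hw0 : ∀ k, w k = 0
  · funext k
    have := hw0 k
    have : v k = c * R k := by linarith [this, (by simp [hwdef] : w k = v k - c * R k)]
    simpa using this
  · exfalso
    push_neg at hw0
    obtain ⟨b, hb⟩ := hw0
    have hbpos : 0 < w b := lt_of_le_of_ne (hwnn b) (Ne.symm hb)
    have h1 : 0 < mvec T w k0 := mvec_pos_of_nonneg hT hwnn ⟨b, hbpos⟩ k0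
    rw [hTw k0, hwk0, mul_zero] at h1
    exact lt_irrefl 0 h1


lemma pf_exists (T : n → n → ℝ) (hT : ∀ k b, 0 < T k b) :
    ∃ lam : ℝ, 0 < lam ∧ ∃ R : n → ℝ, (∀ k, 0 < R k) ∧ ∀ k, mvec T R k = lam * R k := by
  classical
  have hune : (Finset.univ : Finset n).Nonempty := Finset.univ_nonempty
  have hpne : (Finset.univ : Finset (n × n)).Nonempty := Finset.univ_nonempty
  set m : ℝ := Finset.univ.inf' hpne (fun p : n × n => T p.1 p.2) with hm
  set Mx : ℝ := Finset.univ.sup' hpne (fun p : n × n => T p.1 p.2) with hMx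
  have hmpos : 0 < m := by
    rw [hm, Finset.lt_inf'_iff]
    exact fun p _ => hT p.1 p.2
  have hmle : ∀ k b, m ≤ T k b := fun k b =>
    Finset.inf'_le _ (Finset.mem_univ ((k, b) : n × n))
  have hleM : ∀ k b, T k b ≤ Mx := fun k b =>
    Finset.le_sup' (fun p : n × n => T p.1 p.2) (Finset.mem_univ ((k, b) : n × n))
  have hMpos : 0 < Mx := lt_of_lt_of_le (hT (Classical.arbitrary n) (Classical.arbitrary n))
    (hleM _ _)
  have hmM : m ≤ Mx := le_trans (hmle (Classical.arbitrary n) (Classical.arbitrary n)) (hleM _ _)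
  set Nc : ℝ := (Fintype.card n : ℝ) with hNc
  have hNpos : 0 < Nc := by
    rw [hNc]; exact_mod_cast Fintype.card_pos
  have hN1 : (1:ℝ) ≤ Nc := by rw [hNc]; exact_mod_cast Fintype.card_pos
  set δ : ℝ := m / (Nc * Mx) with hδ
  have hδpos : 0 < δ := div_pos hmpos (mul_pos hNpos hMpos)
  set B : ℝ := Nc * Mx with hB
  have hBpos : 0 < B := mul_pos hNpos hMpos
  -- the set C
  set C : Set (n → ℝ) := {x | (∀ k, δ ≤ x k) ∧ ∑ k, x k = 1} with hC
  have hCnonneg : ∀ x ∈ C, ∀ k, (0:ℝ) ≤ x k := fun x hx k => le_trans hδpos.le (hx.1 k)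
  have hCle1 : ∀ x ∈ C, ∀ k, x k ≤ 1 := by
    intro x hx k
    have := Finset.single_le_sum (f := x) (fun b _ => hCnonneg x hx b) (Finset.mem_univ k)
    rw [hx.2] at this; exact this
  -- feasible theta bounded by B
  have hbound : ∀ x ∈ C, ∀ θ : ℝ, 0 ≤ θ → (∀ k, θ * x k ≤ mvec T x k) → θ ≤ B := by
    intro x hx θ hθ hfeas
    have h1 : θ = θ * ∑ k, x k := by rw [hx.2, mul_one]
    have h2 : θ * ∑ k, x k ≤ ∑ k, mvec T x k := by
      rw [Finset.mul_sum]
      exact Finset.sum_le_sum fun k _ => hfeas k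
    have h3 : ∀ k, mvec T x k ≤ Mx := by
      intro k
      calc mvec T x k = ∑ b, T k b * x b := rfl
        _ ≤ ∑ b, Mx * x b :=
            Finset.sum_le_sum fun b _ => mul_le_mul_of_nonneg_right (hleM k b) (hCnonneg x hx b)
        _ = Mx * ∑ b, x b := by rw [Finset.mul_sum]
        _ = Mx := by rw [hx.2, mul_one]
    have h4 : ∑ k, mvec T x k ≤ Nc * Mx := by
      calc ∑ k, mvec T x k ≤ ∑ _k : n, Mx := Finset.sum_le_sum fun k _ => h3 k
        _ = Nc * Mx := by rw [Finset.sum_const, hNc, nsmul_eq_mul, Finset.card_univ]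
    linarith
  -- the set S
  set S : Set (ℝ × (n → ℝ)) :=
    {p | 0 ≤ p.1 ∧ p.1 ≤ B ∧ p.2 ∈ C ∧ ∀ k, p.1 * p.2 k ≤ mvec T p.2 k} with hS
  -- image of C under T, normalized, stays in C
  -- compactness
  have hScompact : IsCompact S := by
    have hclosed : IsClosed S := by
      have h1 : IsClosed {p : ℝ × (n → ℝ) | 0 ≤ p.1} := isClosed_le continuous_const continuous_fst
      have h2 : IsClosed {p : ℝ × (n → ℝ) | p.1 ≤ B} := isClosed_le continuous_fst continuous_const
      have h3 : ∀ k : n, IsClosed {p : ℝ × (n → ℝ) | δ ≤ p.2 k} := fun k =>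
        isClosed_le continuous_const ((continuous_apply k).comp continuous_snd)
      have h4 : IsClosed {p : ℝ × (n → ℝ) | ∑ k, p.2 k = 1} := by
        apply isClosed_eq _ continuous_const
        exact continuous_finset_sum _ fun k _ => (continuous_apply k).comp continuous_snd
      have h5 : ∀ k : n, IsClosed {p : ℝ × (n → ℝ) | p.1 * p.2 k ≤ mvec T p.2 k} := by
        intro k
        apply isClosed_le
        · exact continuous_fst.mul ((continuous_apply k).comp continuous_snd)
        · exact continuous_finset_sum _ fun b _ =>
            (continuous_const.mul ((continuous_apply b).comp continuous_snd))
      have : S = {p : ℝ × (n → ℝ) | 0 ≤ p.1} ∩ {p | p.1 ≤ B} ∩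
          (⋂ k, {p : ℝ × (n → ℝ) | δ ≤ p.2 k}) ∩ {p | ∑ k, p.2 k = 1} ∩
          ⋂ k, {p : ℝ × (n → ℝ) | p.1 * p.2 k ≤ mvec T p.2 k} := by
        ext p
        simp only [hS, hC, Set.mem_setOf_eq, Set.mem_inter_iff, Set.mem_iInter]
        tauto
      rw [this]
      exact ((((h1.inter h2).inter (isClosed_iInter h3)).inter h4).inter (isClosed_iInter h5))
    have hsub : S ⊆ (Set.Icc (0:ℝ) B) ×ˢ (Set.univ.pi fun _ : n => Set.Icc δ 1) := by
      rintro ⟨θ, x⟩ ⟨h1, h2, hx, _⟩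
      constructor
      · exact ⟨h1, h2⟩
      · intro k _
        exact ⟨hx.1 k, hCle1 x hx k⟩
    exact ((isCompact_Icc).prod (isCompact_univ_pi fun _ => isCompact_Icc)).of_isClosed_subset
      hclosed hsub
  -- S is nonempty
  have hδle : δ ≤ 1 / Nc := by
    rw [hδ, div_le_div_iff₀ (mul_pos hNpos hMpos) hNpos]
    calc m * Nc ≤ Mx * Nc := mul_le_mul_of_nonneg_right hmM hNpos.le
      _ = 1 * (Nc * Mx) := by ring
  have hpmu : ((m, fun _ => 1 / Nc) : ℝ × (n → ℝ)) ∈ S := by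
    refine ⟨hmpos.le, le_trans hmM (by nlinarith [hMpos, hN1]), ⟨fun k => hδle, ?_⟩, ?_⟩
    · rw [Finset.sum_const, nsmul_eq_mul, Finset.card_univ, ← hNc]
      field_simp
    · intro k
      have h1 : mvec T (fun _ => 1 / Nc) k = (∑ b, T k b) * (1 / Nc) := by
        simp [mvec, Finset.sum_mul]
      have h2 : Nc * m ≤ ∑ b, T k b := by
        calc Nc * m = ∑ _b : n, m := by
              rw [Finset.sum_const, nsmul_eq_mul, Finset.card_univ, hNc]
          _ ≤ ∑ b, T k b := Finset.sum_le_sum fun b _ => hmle k b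
      rw [h1]
      have hNinv : (0:ℝ) < 1 / Nc := by positivity
      calc m * (1 / Nc) ≤ (Nc * m) * (1 / Nc) := by
            nlinarith [mul_nonneg (mul_nonneg (sub_nonneg.mpr hN1) hmpos.le) hNinv.le]
        _ ≤ (∑ b, T k b) * (1 / Nc) := mul_le_mul_of_nonneg_right h2 hNinv.le
  have hune' : S.Nonempty := ⟨_, hpmu⟩
  -- take the max
  obtain ⟨⟨lam, x⟩, hmemS, hmax⟩ :=
    hScompact.exists_isMaxOn hune' (continuous_fst.continuousOn)
  obtain ⟨hlam0, hlamB, hxC, hfeas⟩ := hmemS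
  have hlampos : 0 < lam := lt_of_lt_of_le hmpos (hmax hpmu)
  refine ⟨lam, hlampos, x, fun k => lt_of_lt_of_le hδpos (hxC.1 k), ?_⟩
  by_contra hcon
  push_neg at hcon
  obtain ⟨k0, hk0⟩ := hcon
  have hk0' : lam * x k0 < mvec T x k0 := lt_of_le_of_ne (hfeas k0) (Ne.symm hk0)
  set w : n → ℝ := fun k => mvec T x k - lam * x k with hw
  have hwnn : ∀ k, 0 ≤ w k := fun k => sub_nonneg.mpr (hfeas k)
  have hwk0 : 0 < w k0 := sub_pos.mpr hk0'
  set z : n → ℝ := mvec T x with hz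
  have hmz : ∀ k, m ≤ z k := by
    intro k
    calc m = m * ∑ b, x b := by rw [hxC.2, mul_one]
      _ = ∑ b, m * x b := by rw [Finset.mul_sum]
      _ ≤ ∑ b, T k b * x b :=
          Finset.sum_le_sum fun b _ => mul_le_mul_of_nonneg_right (hmle k b) (hCnonneg x hxC b)
      _ = z k := rfl
  have hzM : ∀ k, z k ≤ Mx := by
    intro k
    calc z k = ∑ b, T k b * x b := rfl
      _ ≤ ∑ b, Mx * x b :=
          Finset.sum_le_sum fun b _ => mul_le_mul_of_nonneg_right (hleM k b) (hCnonneg x hxC b)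
      _ = Mx * ∑ b, x b := by rw [Finset.mul_sum]
      _ = Mx := by rw [hxC.2, mul_one]
  set s : ℝ := ∑ k, z k with hs
  have hspos : 0 < s := by
    have : 0 < m * Nc := mul_pos hmpos hNpos
    calc (0:ℝ) < Nc * m := mul_pos hNpos hmpos
      _ = ∑ _k : n, m := by rw [Finset.sum_const, nsmul_eq_mul, Finset.card_univ, hNc]
      _ ≤ ∑ k, z k := Finset.sum_le_sum fun k _ => hmz k
  have hsB : s ≤ Nc * Mx := by
    calc s ≤ ∑ _k : n, Mx := Finset.sum_le_sum fun k _ => hzM k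
      _ = Nc * Mx := by rw [Finset.sum_const, nsmul_eq_mul, Finset.card_univ, hNc]
  set y : n → ℝ := fun k => z k / s with hy
  have hyC : y ∈ C := by
    constructor
    · intro k
      rw [hδ, hB]
      exact div_le_div₀ (le_trans hmpos.le (hmz k)) (hmz k) hspos hsB
    · rw [hy]
      simp only
      rw [← Finset.sum_div, ← hs, div_self hspos.ne']
  have hmvy : ∀ k, mvec T y k = mvec T z k / s := by
    intro k
    simp only [mvec, hy, Finset.sum_div]
    congr 1; ext b; rw [mul_div_assoc]
  have hTz : ∀ k, lam * z k < mvec T z k := by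
    intro k
    have hzb : ∀ b, z b = w b + lam * x b := fun b => by
      show mvec T x b = (mvec T x b - lam * x b) + lam * x b; ring
    have hsplit : mvec T z k = mvec T w k + lam * z k := by
      calc mvec T z k = ∑ b, T k b * (w b + lam * x b) :=
            Finset.sum_congr rfl fun b _ => by rw [← hzb b]
        _ = (∑ b, T k b * w b) + lam * ∑ b, T k b * x b := by
            rw [Finset.mul_sum, ← Finset.sum_add_distrib]
            exact Finset.sum_congr rfl fun b _ => by ring
        _ = mvec T w k + lam * z k := rfl
    have hwpos : 0 < mvec T w k := mvec_pos_of_nonneg hT hwnn ⟨k0, hwk0⟩ k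
    linarith
  have hTy : ∀ k, lam * y k < mvec T y k := by
    intro k
    rw [hmvy k, hy]
    simp only
    rw [← mul_div_assoc]
    exact (div_lt_div_iff_of_pos_right hspos).mpr (hTz k)
  set ε : ℝ := Finset.univ.inf' hune (fun k => mvec T y k - lam * y k) with hε
  have hεpos : 0 < ε := by
    rw [hε, Finset.lt_inf'_iff]
    exact fun k _ => sub_pos.mpr (hTy k)
  have hεle : ∀ k, ε ≤ mvec T y k - lam * y k := fun k =>
    Finset.inf'_le _ (Finset.mem_univ k)
  have hfeas' : ∀ k, (lam + ε) * y k ≤ mvec T y k := by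
    intro k
    have hy1 : y k ≤ 1 := hCle1 y hyC k
    have hy0 : 0 ≤ y k := hCnonneg y hyC k
    have : ε * y k ≤ ε := by nlinarith
    nlinarith [hεle k]
  have hmem : ((lam + ε, y) : ℝ × (n → ℝ)) ∈ S :=
    ⟨by positivity, hbound y hyC (lam + ε) (by positivity) hfeas', hyC, hfeas'⟩
  have h := hmax hmem
  have : lam + ε ≤ lam := h
  linarith


end PF

section Alg

variable {ι : Type*} [Fintype ι] [Nonempty ι] (A : NSetAlgebra ι)

/-- additive functions out of `ι →₀ ℕ` expand over the basis -/
lemma addhom_expand {M : Type*} [AddCommMonoid M] (f : (ι →₀ ℕ) → M) (h0 : f 0 = 0)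
    (hadd : ∀ a b, f (a + b) = f a + f b) (a : ι →₀ ℕ) :
    f a = ∑ i, (a i) • f (Finsupp.single i 1) := by
  classical
  have hsingle : ∀ (i : ι) (b : ℕ), f (Finsupp.single i b) = b • f (Finsupp.single i 1) := by
    intro i b
    induction b with
    | zero => simp [h0]
    | succ b ih =>
        have : Finsupp.single i (b + 1) = Finsupp.single i b + Finsupp.single i 1 := by
          rw [← Finsupp.single_add]
        rw [this, hadd, ih, succ_nsmul]
  induction a using Finsupp.induction with
  | zero => simp [h0]
  | single_add i b g hig hb ih =>
      rw [hadd, ih, hsingle]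
      have : ∀ j : ι, ((Finsupp.single i b + g) j) • f (Finsupp.single j 1)
          = (if j = i then b • f (Finsupp.single i 1) else 0) + (g j) • f (Finsupp.single j 1) := by
        intro j
        by_cases hji : j = i
        · subst hji
          simp [Finsupp.single_apply, add_nsmul]
        · simp [Finsupp.single_apply, Ne.symm hji, hji]
      rw [Finset.sum_congr rfl fun j _ => this j, Finset.sum_add_distrib,
        Finset.sum_ite_eq' Finset.univ i (fun _ => b • f (Finsupp.single i 1))]
      simp [add_comm]

lemma mul_single_left (x : ι →₀ ℕ) (i k : ι) :
    (A.mul (Finsupp.single i 1) x) k = ∑ b, x b * A.N i b k := by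
  have h := addhom_expand (fun y => A.mul (Finsupp.single i 1) y) (A.mul_zero _)
    (fun a b => A.left_distrib _ a b) x
  have h2 := congrArg (fun z => z k) h
  rw [h2, Finsupp.finset_sum_apply]
  exact Finset.sum_congr rfl fun b _ => by simp [NSetAlgebra.N, smul_eq_mul]

lemma mul_single_right (x : ι →₀ ℕ) (j k : ι) :
    (A.mul x (Finsupp.single j 1)) k = ∑ b, x b * A.N b j k := by
  have h := addhom_expand (fun y => A.mul y (Finsupp.single j 1)) (A.zero_mul _)
    (fun a b => A.right_distrib a b _) x
  have h2 := congrArg (fun z => z k) h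
  rw [h2, Finsupp.finset_sum_apply]
  exact Finset.sum_congr rfl fun b _ => by simp [NSetAlgebra.N, smul_eq_mul]

/-- the associativity identity on structure constants -/
lemma assocN (i c j k : ι) :
    ∑ b, A.N c j b * A.N i b k = ∑ b, A.N i c b * A.N b j k := by
  have h1 : (A.mul (Finsupp.single i 1) (A.mul (Finsupp.single c 1) (Finsupp.single j 1))) k
      = ∑ b, A.N c j b * A.N i b k := by
    rw [mul_single_left]
    exact Finset.sum_congr rfl fun b _ => rfl
  have h2 : (A.mul (A.mul (Finsupp.single i 1) (Finsupp.single c 1)) (Finsupp.single j 1)) k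
      = ∑ b, A.N i c b * A.N b j k := by
    rw [mul_single_right]
    exact Finset.sum_congr rfl fun b _ => rfl
  rw [← h1, ← h2, A.mul_assoc]

lemma starMul_single (i : ι) (r : ι → ℝ) (k : ι) :
    A.starMul (toRealVec (Finsupp.single i 1)) r k = ∑ b, (A.N i b k : ℝ) * r b := by
  classical
  rw [NSetAlgebra.starMul]
  have : ∀ a : ι, ∑ j, (toRealVec (Finsupp.single i 1)) a * r j * (A.N a j k : ℝ)
      = if i = a then ∑ j, (A.N i j k : ℝ) * r j else 0 := by
    intro a
    by_cases hia : i = a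
    · subst hia
      simp [toRealVec, Finsupp.single_apply]
      exact Finset.sum_congr rfl fun j _ => by ring
    · simp [toRealVec, Finsupp.single_apply, hia]
  rw [Finset.sum_congr rfl fun a _ => this a, Finset.sum_ite_eq Finset.univ i
    (fun _ => ∑ j, (A.N i j k : ℝ) * r j)]
  simp

/-- φ expands over the basis -/
lemma phi_expand (φ : (ι →₀ ℕ) → ℝ) (hφ : A.IsFPCharacter φ) (a : ι →₀ ℕ) :
    φ a = ∑ i, (a i : ℝ) * φ (Finsupp.single i 1) := by
  have h0 : φ 0 = 0 := by
    have := hφ.map_add 0 0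
    simp at this
    linarith
  have := addhom_expand φ h0 hφ.map_add a
  rw [this]
  exact Finset.sum_congr rfl fun i _ => by rw [nsmul_eq_mul]

end Alg

end PFaux

open NSetAlgebra in
/-- Existence and uniqueness up to scaling of the regular element: there is a strictly
positive `R` with `a ⋆ R = φ(a) • R` for all `a`, and any nonzero `r` with
`e_i ⋆ r = φ(e_i) • r` for all `i` is a scalar multiple of `R`. -/
theorem stmt9 {ι : Type*} [Fintype ι] [Nonempty ι]
    (A : NSetAlgebra ι) (hA : A.Transitive)
    (φ : (ι →₀ ℕ) → ℝ) (hφ : A.IsFPCharacter φ) :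
    ∃ R : ι → ℝ, (∀ i, 0 < R i) ∧
      (∀ a : ι →₀ ℕ, A.starMul (toRealVec a) R = φ a • R) ∧
      (∀ r : ι → ℝ, r ≠ 0 →
        (∀ i : ι, A.starMul (toRealVec (Finsupp.single i 1)) r
          = φ (Finsupp.single i 1) • r) →
        ∃ c : ℝ, r = c • R) := by
  classical
  open PFaux in
  set φi : ι → ℝ := fun i => φ (Finsupp.single i 1) with hφidef
  have hφipos : ∀ i, 0 < φi i := fun i => hφ.pos i
  -- the right-multiplication-by-s matrix
  set Tm : ι → ι → ℝ := fun k b => ∑ j, (A.N b j k : ℝ) with hTmdef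
  have hNnn : ∀ i j k : ι, (0:ℝ) ≤ (A.N i j k : ℝ) := fun i j k => Nat.cast_nonneg _
  have hTmpos : ∀ k b, 0 < Tm k b := by
    intro k b
    obtain ⟨v, hv⟩ := (hA b k).2
    have h1 : (1:ℕ) ≤ A.N b v k := by
      have h := Finsupp.le_def.mp hv k
      simpa [Finsupp.single_apply, NSetAlgebra.N] using h
    have h2 : (1:ℝ) ≤ (A.N b v k : ℝ) := by exact_mod_cast h1
    have h3 : (A.N b v k : ℝ) ≤ Tm k b :=
      Finset.single_le_sum (fun j _ => hNnn b j k) (Finset.mem_univ v)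
    linarith
  obtain ⟨lam, hlampos, R, hRpos, hTR⟩ := PFaux.pf_exists Tm hTmpos
  -- commutation of L_i with Tm
  have hcommN : ∀ i c k, ∑ b, (A.N i b k : ℝ) * Tm b c = ∑ b, Tm k b * (A.N i c b : ℝ) := by
    intro i c k
    calc ∑ b, (A.N i b k : ℝ) * Tm b c
        = ∑ b, ∑ j, (A.N i b k : ℝ) * (A.N c j b : ℝ) := by
          refine Finset.sum_congr rfl fun b _ => ?_
          rw [hTmdef, Finset.mul_sum]
      _ = ∑ j, ∑ b, (A.N i b k : ℝ) * (A.N c j b : ℝ) := Finset.sum_comm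
      _ = ∑ j, ∑ b, (A.N i c b : ℝ) * (A.N b j k : ℝ) := by
          refine Finset.sum_congr rfl fun j _ => ?_
          have h := congrArg (fun n : ℕ => (n : ℝ)) (PFaux.assocN A i c j k)
          push_cast at h
          rw [show (∑ b, (A.N i b k : ℝ) * (A.N c j b : ℝ))
              = ∑ b, (A.N c j b : ℝ) * (A.N i b k : ℝ) from
            Finset.sum_congr rfl fun b _ => mul_comm _ _]
          exact h
      _ = ∑ b, ∑ j, (A.N i c b : ℝ) * (A.N b j k : ℝ) := Finset.sum_comm
      _ = ∑ b, Tm k b * (A.N i c b : ℝ) := by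
          refine Finset.sum_congr rfl fun b _ => ?_
          rw [hTmdef, ← Finset.mul_sum]
          ring
  have hcomm : ∀ (i : ι) (v : ι → ℝ) (k : ι),
      ∑ b, (A.N i b k : ℝ) * mvec Tm v b
        = mvec Tm (fun b => ∑ c, (A.N i c b : ℝ) * v c) k := by
    intro i v k
    calc ∑ b, (A.N i b k : ℝ) * mvec Tm v b
        = ∑ b, ∑ c, (A.N i b k : ℝ) * Tm b c * v c := by
          refine Finset.sum_congr rfl fun b _ => ?_
          rw [mvec, Finset.mul_sum]
          exact Finset.sum_congr rfl fun c _ => by ring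
      _ = ∑ c, (∑ b, (A.N i b k : ℝ) * Tm b c) * v c := by
          rw [Finset.sum_comm]
          exact Finset.sum_congr rfl fun c _ => by rw [Finset.sum_mul]
      _ = ∑ c, (∑ b, Tm k b * (A.N i c b : ℝ)) * v c := by
          exact Finset.sum_congr rfl fun c _ => by rw [hcommN i c k]
      _ = ∑ b, ∑ c, Tm k b * ((A.N i c b : ℝ) * v c) := by
          rw [Finset.sum_comm]
          exact Finset.sum_congr rfl fun b _ => by
            rw [Finset.sum_mul]
            exact Finset.sum_congr rfl fun c _ => by ring
      _ = mvec Tm (fun b => ∑ c, (A.N i c b : ℝ) * v c) k := by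
          rw [mvec]
          exact Finset.sum_congr rfl fun b _ => by rw [Finset.mul_sum]
  -- each L_i R is a lam-eigenvector of Tm, hence proportional to R
  have hLR : ∀ i, ∃ c : ℝ, (fun k => ∑ b, (A.N i b k : ℝ) * R b) = c • R := by
    intro i
    refine PFaux.pf_unique hTmpos hRpos hTR ?_
    intro k
    calc mvec Tm (fun b => ∑ c, (A.N i c b : ℝ) * R c) k
        = ∑ b, (A.N i b k : ℝ) * mvec Tm R b := (hcomm i R k).symm
      _ = ∑ b, (A.N i b k : ℝ) * (lam * R b) :=
          Finset.sum_congr rfl fun b _ => by rw [hTR b]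
      _ = lam * ∑ b, (A.N i b k : ℝ) * R b := by
          rw [Finset.mul_sum]
          exact Finset.sum_congr rfl fun b _ => by ring
  -- the character relation on structure constants
  have hphiN : ∀ i b, ∑ k, (A.N i b k : ℝ) * φi k = φi i * φi b := by
    intro i b
    have h1 := PFaux.phi_expand A φ hφ (A.mul (Finsupp.single i 1) (Finsupp.single b 1))
    rw [hφ.map_mul] at h1
    exact h1.symm
  have hdotpos : 0 < ∑ b, φi b * R b :=
    Finset.sum_pos (fun b _ => mul_pos (hφipos b) (hRpos b)) Finset.univ_nonempty
  have hreg : ∀ i k, ∑ b, (A.N i b k : ℝ) * R b = φi i * R k := by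
    intro i
    obtain ⟨ci, hci⟩ := hLR i
    have hci' : ∀ k, ∑ b, (A.N i b k : ℝ) * R b = ci * R k := by
      intro k
      have := congrFun hci k
      simpa using this
    have hsum : ci * ∑ k, φi k * R k = φi i * ∑ b, φi b * R b := by
      calc ci * ∑ k, φi k * R k = ∑ k, φi k * (ci * R k) := by
            rw [Finset.mul_sum]
            exact Finset.sum_congr rfl fun k _ => by ring
        _ = ∑ k, φi k * ∑ b, (A.N i b k : ℝ) * R b :=
            Finset.sum_congr rfl fun k _ => by rw [hci' k]
        _ = ∑ k, ∑ b, (A.N i b k : ℝ) * φi k * R b := by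
            refine Finset.sum_congr rfl fun k _ => ?_
            rw [Finset.mul_sum]
            exact Finset.sum_congr rfl fun b _ => by ring
        _ = ∑ b, (∑ k, (A.N i b k : ℝ) * φi k) * R b := by
            rw [Finset.sum_comm]
            exact Finset.sum_congr rfl fun b _ => by rw [Finset.sum_mul]
        _ = ∑ b, φi i * (φi b * R b) := by
            refine Finset.sum_congr rfl fun b _ => ?_
            rw [hphiN i b]; ring
        _ = φi i * ∑ b, φi b * R b := by
            rw [Finset.mul_sum]
    have hcieq : ci = φi i := by
      have h := hsum
      have hne : (∑ k, φi k * R k) ≠ 0 := ne_of_gt hdotpos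
      exact mul_right_cancel₀ hne h
    intro k
    rw [hci' k, hcieq]
  refine ⟨R, hRpos, ?_, ?_⟩
  · -- regularity for all a
    intro a
    funext k
    have h1 : A.starMul (toRealVec a) R k = ∑ i, (a i : ℝ) * (∑ j, (A.N i j k : ℝ) * R j) := by
      rw [NSetAlgebra.starMul]
      refine Finset.sum_congr rfl fun i _ => ?_
      rw [Finset.mul_sum]
      exact Finset.sum_congr rfl fun j _ => by rw [toRealVec]; ring
    rw [h1]
    have h2 : ∑ i, (a i : ℝ) * (∑ j, (A.N i j k : ℝ) * R j) = (∑ i, (a i : ℝ) * φi i) * R k := by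
      rw [Finset.sum_mul]
      refine Finset.sum_congr rfl fun i _ => ?_
      rw [hreg i k]; ring
    rw [h2, ← PFaux.phi_expand A φ hφ a]
    simp
  · -- uniqueness up to scaling
    intro r _hr0 hr
    have hr' : ∀ i k, ∑ b, (A.N i b k : ℝ) * r b = φi i * r k := by
      intro i k
      have h := congrFun (hr i) k
      rw [PFaux.starMul_single] at h
      simpa using h
    set Mm : ι → ι → ℝ := fun k b => ∑ u, (A.N u b k : ℝ) with hMmdef
    have hMmpos : ∀ k b, 0 < Mm k b := by
      intro k b
      obtain ⟨u, hu⟩ := (hA b k).1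
      have h1 : (1:ℕ) ≤ A.N u b k := by
        have h := Finsupp.le_def.mp hu k
        simpa [Finsupp.single_apply, NSetAlgebra.N] using h
      have h2 : (1:ℝ) ≤ (A.N u b k : ℝ) := by exact_mod_cast h1
      have h3 : (A.N u b k : ℝ) ≤ Mm k b :=
        Finset.single_le_sum (fun u _ => hNnn u b k) (Finset.mem_univ u)
      linarith
    set sφ : ℝ := ∑ u, φi u with hsφdef
    have key : ∀ (v : ι → ℝ), (∀ i k, ∑ b, (A.N i b k : ℝ) * v b = φi i * v k) →
        ∀ k, mvec Mm v k = sφ * v k := by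
      intro v hv k
      calc mvec Mm v k = ∑ b, ∑ u, (A.N u b k : ℝ) * v b := by
            rw [mvec]
            exact Finset.sum_congr rfl fun b _ => by rw [hMmdef, Finset.sum_mul]
        _ = ∑ u, ∑ b, (A.N u b k : ℝ) * v b := Finset.sum_comm
        _ = ∑ u, φi u * v k := Finset.sum_congr rfl fun u _ => hv u k
        _ = sφ * v k := by rw [hsφdef, Finset.sum_mul]
    exact PFaux.pf_unique hMmpos hRpos (key R hreg) (key r hr')
end

section
/- Let A = ι →₀ ℕ be a transitive finite-rank ℕSet algebra with Frobenius–Perron character φ, and let i ∈ ι. Then: (1) d := φ(e_i) is an algebraic integer (integral over ℤ), and every complex root z of the minimal polynomial of d over ℚ satisfies |z| ≤ d; and (2) φ(e_i) ≥ 1. -/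
open Finsupp

lemma eval_charpoly_aux {n R : Type*} [Fintype n] [DecidableEq n] [CommRing R]
    (M : Matrix n n R) (μ : R) :
    M.charpoly.eval μ = (Matrix.diagonal (fun _ => μ) - M).det := by
  rw [Matrix.charpoly, ← Polynomial.coe_evalRingHom, RingHom.map_det]
  congr 1
  ext j k
  by_cases h : j = k <;>
    simp [h, Matrix.charmatrix_apply, Matrix.diagonal_apply, Matrix.map_apply]

open NSetAlgebra in
/-- For a simple element `e_i`: (1) `d = φ(e_i)` is an algebraic integer all of whose
algebraic conjugates `z` satisfy `|z| ≤ d`; and (2) `φ(e_i) ≥ 1`. -/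
theorem stmt11 {ι : Type*} [Fintype ι] [Nonempty ι]
    (A : NSetAlgebra ι) (hA : A.Transitive)
    (φ : (ι →₀ ℕ) → ℝ) (hφ : A.IsFPCharacter φ) (i : ι) :
    (IsIntegral ℤ (φ (Finsupp.single i 1)) ∧
      ∀ z : ℂ, Polynomial.aeval z (minpoly ℚ (φ (Finsupp.single i 1))) = 0 →
        ‖z‖ ≤ φ (Finsupp.single i 1)) ∧
    1 ≤ φ (Finsupp.single i 1) := by
    classical
  set d := φ (Finsupp.single i 1) with hd
  have hφ0 : φ 0 = 0 := by
    have h := hφ.map_add 0 0; simp only [add_zero] at h; linarith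
  have hsingle : ∀ (k : ι) (n : ℕ),
      φ (Finsupp.single k n) = (n : ℝ) * φ (Finsupp.single k 1) := by
    intro k n
    induction n with
    | zero => simpa using hφ0
    | succ n ih =>
      have : (Finsupp.single k (n + 1) : ι →₀ ℕ)
          = Finsupp.single k n + Finsupp.single k 1 := by
        rw [← Finsupp.single_add]
      rw [this, hφ.map_add, ih]
      push_cast; ring
  -- φ of any element is the weighted sum of its coordinates
  have hsum : ∀ a : ι →₀ ℕ,
      φ a = ∑ k : ι, (a k : ℝ) * φ (Finsupp.single k 1) := by
    intro a
    induction a using Finsupp.induction with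
    | zero => simp [hφ0]
    | single_add a b f _ _ ih =>
      have hb : ∑ k : ι, ((Finsupp.single a b : ι →₀ ℕ) k : ℝ) * φ (Finsupp.single k 1)
          = (b : ℝ) * φ (Finsupp.single a 1) := by
        rw [Finset.sum_eq_single a]
        · simp
        · intro k _ hk
          rw [Finsupp.single_apply, if_neg (Ne.symm hk)]
          simp
        · simp
      rw [hφ.map_add, ih, hsingle]
      simp only [Finsupp.add_apply, Nat.cast_add, add_mul, Finset.sum_add_distrib]
      rw [hb]
  set v : ι → ℝ := fun k => φ (Finsupp.single k 1) with hv
  have hvpos : ∀ k, 0 < v k := fun k => hφ.pos k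
  set M : Matrix ι ι ℤ := Matrix.of (fun j k => (A.N i j k : ℤ)) with hM
  -- the eigenvalue equation
  have hMv : ∀ j, ∑ k : ι, (A.N i j k : ℝ) * v k = d * v j := by
    intro j
    have h1 : φ (A.mul (Finsupp.single i 1) (Finsupp.single j 1)) = d * v j :=
      hφ.map_mul _ _
    rw [hsum] at h1
    exact h1
  have hv0 : v ≠ 0 := by
    intro h
    have := hvpos (Classical.arbitrary ι)
    rw [h] at this
    simp at this
  -- d is a root of the characteristic polynomial of M over any field
  have hroot : ∀ (F : Type) [Field F] (c : ℤ →+* F) (z : F),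
      Polynomial.eval z (M.charpoly.map c) = 0 ↔
      ∃ w : ι → F, w ≠ 0 ∧ Matrix.mulVec (M.map c) w = z • w := by
    intro F _ c z
    rw [← Matrix.charpoly_map M c, eval_charpoly_aux]
    rw [← Matrix.exists_mulVec_eq_zero_iff]
    constructor
    · rintro ⟨w, hw0, hw⟩
      refine ⟨w, hw0, ?_⟩
      have := hw
      rw [Matrix.sub_mulVec] at this
      have h2 : ∀ x, z * w x = (Matrix.mulVec (M.map c) w) x := by
        intro x
        have h3 := congrFun this x
        simp only [Pi.sub_apply, Matrix.mulVec_diagonal, Pi.zero_apply] at h3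
        exact sub_eq_zero.mp h3
      funext x
      rw [Pi.smul_apply, smul_eq_mul, h2]
    · rintro ⟨w, hw0, hw⟩
      refine ⟨w, hw0, ?_⟩
      rw [Matrix.sub_mulVec, hw]
      funext x
      simp [Matrix.mulVec_diagonal]
  -- d is a root of charpoly over ℝ
  have hdroot : Polynomial.eval d (M.charpoly.map (Int.castRingHom ℝ)) = 0 := by
    rw [hroot ℝ (Int.castRingHom ℝ) d]
    refine ⟨v, hv0, ?_⟩
    funext j
    rw [Pi.smul_apply, smul_eq_mul]
    simp only [Matrix.mulVec, dotProduct, Matrix.map_apply, hM, Matrix.of_apply]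
    push_cast
    exact hMv j
  have hint : IsIntegral ℤ d := by
    refine ⟨M.charpoly, M.charpoly_monic, ?_⟩
    rwa [Polynomial.eval₂_eq_eval_map, algebraMap_int_eq]
  refine ⟨⟨hint, ?_⟩, ?_⟩
  · -- conjugates are bounded
    intro z hz
    have hdvd : minpoly ℚ d ∣ M.charpoly.map (Int.castRingHom ℚ) := by
      apply minpoly.dvd
      rw [show (Int.castRingHom ℚ) = algebraMap ℤ ℚ from (algebraMap_int_eq (R := ℚ)).symm,
        Polynomial.aeval_map_algebraMap]
      rwa [Polynomial.aeval_def, Polynomial.eval₂_eq_eval_map,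
        algebraMap_int_eq]
    -- z is a root of charpoly over ℂ
    have hzroot : Polynomial.eval z (M.charpoly.map (Int.castRingHom ℂ)) = 0 := by
      obtain ⟨q, hq⟩ := hdvd
      have : M.charpoly.map (Int.castRingHom ℂ)
          = ((minpoly ℚ d).map (algebraMap ℚ ℂ)) * (q.map (algebraMap ℚ ℂ)) := by
        rw [← Polynomial.map_mul, ← hq, Polynomial.map_map]
        congr 1
      rw [this, Polynomial.eval_mul]
      have : Polynomial.eval z ((minpoly ℚ d).map (algebraMap ℚ ℂ)) = 0 := by
        rwa [← Polynomial.eval₂_eq_eval_map, ← Polynomial.aeval_def]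
      rw [this, MulZeroClass.zero_mul]
    rw [hroot ℂ (Int.castRingHom ℂ) z] at hzroot
    obtain ⟨w, hw0, hw⟩ := hzroot
    -- Perron-Frobenius bound
    obtain ⟨j0, _, hj0⟩ := Finset.exists_max_image Finset.univ
      (fun j => ‖w j‖ / v j) Finset.univ_nonempty
    set c : ℝ := ‖w j0‖ / v j0 with hc
    have hcw : ∀ k, ‖w k‖ ≤ c * v k := by
      intro k
      have := hj0 k (Finset.mem_univ k)
      rw [div_le_iff₀ (hvpos k)] at this
      linarith [this]
    have hcpos : 0 < c := by
      obtain ⟨k, hk⟩ := Function.ne_iff.mp hw0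
      have h1 : 0 < ‖w k‖ := by
        simpa using (norm_pos_iff.mpr hk)
      have := hj0 k (Finset.mem_univ k)
      calc (0:ℝ) < ‖w k‖ / v k := div_pos h1 (hvpos k)
        _ ≤ c := this
    have hwj0 : ‖w j0‖ = c * v j0 := by
      rw [hc, div_mul_cancel₀]
      exact ne_of_gt (hvpos j0)
    have key : ‖z‖ * (c * v j0) ≤ d * (c * v j0) := by
      rw [← hwj0]
      have h1 : ‖z‖ * ‖w j0‖ = ‖z * w j0‖ :=
        (norm_mul z (w j0)).symm
      have h2 : z * w j0 = ∑ k : ι, ((A.N i j0 k : ℂ)) * w k := by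
        have := congrFun hw j0
        rw [Pi.smul_apply, smul_eq_mul] at this
        rw [← this]
        simp only [Matrix.mulVec, dotProduct, Matrix.map_apply, hM, Matrix.of_apply]
        push_cast
        rfl
      rw [h1, h2]
      calc ‖∑ k : ι, ((A.N i j0 k : ℂ)) * w k‖
          ≤ ∑ k : ι, ‖((A.N i j0 k : ℂ)) * w k‖ :=
            norm_sum_le _ _
        _ = ∑ k : ι, (A.N i j0 k : ℝ) * ‖w k‖ := by
            apply Finset.sum_congr rfl
            intro k _
            rw [norm_mul]
            congr 1
            simp
        _ ≤ ∑ k : ι, (A.N i j0 k : ℝ) * (c * v k) := by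
            apply Finset.sum_le_sum
            intro k _
            exact mul_le_mul_of_nonneg_left (hcw k) (by positivity)
        _ = c * ∑ k : ι, (A.N i j0 k : ℝ) * v k := by
            rw [Finset.mul_sum]; apply Finset.sum_congr rfl; intros; ring
        _ = c * (d * v j0) := by rw [hMv j0]
        _ = d * (c * v j0) := by ring
        _ = d * ‖w j0‖ := by rw [hwj0]
    exact le_of_mul_le_mul_right key (mul_pos hcpos (hvpos j0))
  · -- d ≥ 1 via column sums
    have hcol : ∀ k : ι, (1:ℝ) ≤ ∑ j : ι, (A.N i j k : ℝ) := by
      intro k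
      obtain ⟨u, hu⟩ := (hA i k).2
      have h1 : (1:ℕ) ≤ A.N i u k := by
        have := hu k
        simpa [Finsupp.single_apply, NSetAlgebra.N] using this
      calc (1:ℝ) ≤ (A.N i u k : ℝ) := by exact_mod_cast h1
        _ ≤ ∑ j : ι, (A.N i j k : ℝ) :=
          Finset.single_le_sum (f := fun j => (A.N i j k : ℝ))
            (fun j _ => by positivity) (Finset.mem_univ u)
    have hS : 0 < ∑ k : ι, v k :=
      Finset.sum_pos (fun k _ => hvpos k) Finset.univ_nonempty
    have key : (∑ k : ι, v k) ≤ d * ∑ k : ι, v k := by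
      calc (∑ k : ι, v k) = ∑ k : ι, 1 * v k := by simp
        _ ≤ ∑ k : ι, (∑ j : ι, (A.N i j k : ℝ)) * v k := by
            apply Finset.sum_le_sum
            intro k _
            exact mul_le_mul_of_nonneg_right (hcol k) (le_of_lt (hvpos k))
        _ = ∑ j : ι, ∑ k : ι, (A.N i j k : ℝ) * v k := by
            rw [Finset.sum_comm]
            apply Finset.sum_congr rfl
            intros; rw [Finset.sum_mul]
        _ = ∑ j : ι, d * v j := by
            apply Finset.sum_congr rfl
            intro j _; exact hMv j
        _ = d * ∑ k : ι, v k := by rw [Finset.mul_sum]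
    nlinarith [key, hS]
end
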